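/- arXiv:math/0007085 — 8 statements merged into one kernel-verified Lean document; each statement's English description precedes it below -/
import Mathlib

section
/- The sum of the tangent cones is contained in the relative tangent cone: C₀(X) + C₀(Y) ⊆ C₀(X,Y), provided there exist holomorphic curves through 0 in X and in Y realizing each tangent direction. Precisely: if Φ, Ψ : K(r) → ℂⁿ are non-constant holomorphic maps with Φ(0) = Ψ(0) = 0, Φ(K(r)) ⊆ X, Ψ(K(r)) ⊆ Y, and Φ(t)/t^{ord Φ} → −v, Ψ(t)/t^{ord Ψ} → w as t → 0, then v + w ∈ C₀(X,Y). -/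
open Filter Topology

/-- The relative tangent cone `C₀(X,Y)` of two subsets of `ℂⁿ` at the origin:
vectors `v` for which there are sequences `xᵥ ∈ X`, `yᵥ ∈ Y`, `λᵥ ∈ ℂ` with
`xᵥ → 0`, `yᵥ → 0` and `λᵥ • (yᵥ - xᵥ) → v`. -/
def relTangentCone {n : ℕ} (X Y : Set (Fin n → ℂ)) : Set (Fin n → ℂ) :=
  {v | ∃ x y : ℕ → (Fin n → ℂ), ∃ lam : ℕ → ℂ,
    (∀ ν, x ν ∈ X) ∧ (∀ ν, y ν ∈ Y) ∧
    Tendsto x atTop (𝓝 0) ∧ Tendsto y atTop (𝓝 0) ∧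
    Tendsto (fun ν => lam ν • (y ν - x ν)) atTop (𝓝 v)}

/-- The ordinary tangent cone `C₀(X)` at the origin. -/
def tangentCone0 {n : ℕ} (X : Set (Fin n → ℂ)) : Set (Fin n → ℂ) :=
  {v | ∃ x : ℕ → (Fin n → ℂ), ∃ lam : ℕ → ℂ, (∀ ν, x ν ∈ X) ∧
    Tendsto x atTop (𝓝 0) ∧ Tendsto (fun ν => lam ν • x ν) atTop (𝓝 v)}

/-- The vanishing order at `0` of a map `ℂ → E`: the least `m` with nonvanishing
`m`-th derivative at `0` (for holomorphic maps this is the usual order). -/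
noncomputable def holOrder {E : Type*} [NormedAddCommGroup E] [NormedSpace ℂ E]
    (Φ : ℂ → E) : ℕ :=
  sInf {m : ℕ | iteratedDeriv m Φ 0 ≠ 0}

/-- If the normalization exponent is `0`, the limit is forced to be `Φ 0 = 0`. -/
lemma aux_order_zero {n : ℕ} (Φ : ℂ → (Fin n → ℂ)) (hc : ContinuousAt Φ 0)
    (h0 : Φ 0 = 0) {L : Fin n → ℂ}
    (h : Tendsto (fun t : ℂ => (t ^ (0:ℕ))⁻¹ • Φ t) (𝓝[≠] (0:ℂ)) (𝓝 L)) : L = 0 := by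
  have h' : Tendsto Φ (𝓝[≠] (0:ℂ)) (𝓝 0) := by
    simpa [h0] using (hc.tendsto.mono_left nhdsWithin_le_nhds)
  have h'' : Tendsto Φ (𝓝[≠] (0:ℂ)) (𝓝 L) := by simpa using h
  exact tendsto_nhds_unique h'' h'

theorem stmt6 {n : ℕ} (X Y : Set (Fin n → ℂ)) (h0X : 0 ∈ X) (h0Y : 0 ∈ Y)
    (r : ℝ) (hr : 0 < r) (Φ Ψ : ℂ → (Fin n → ℂ))
    (hΦ : DifferentiableOn ℂ Φ (Metric.ball 0 r))
    (hΨ : DifferentiableOn ℂ Ψ (Metric.ball 0 r))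
    (hΦ0 : Φ 0 = 0) (hΨ0 : Ψ 0 = 0)
    (hΦnc : ∃ t ∈ Metric.ball (0:ℂ) r, Φ t ≠ 0)
    (hΨnc : ∃ t ∈ Metric.ball (0:ℂ) r, Ψ t ≠ 0)
    (hΦX : Φ '' Metric.ball 0 r ⊆ X) (hΨY : Ψ '' Metric.ball 0 r ⊆ Y)
    (v w : Fin n → ℂ)
    (hv : Tendsto (fun t : ℂ => (t ^ holOrder Φ)⁻¹ • Φ t) (𝓝[≠] 0) (𝓝 (-v)))
    (hw : Tendsto (fun t : ℂ => (t ^ holOrder Ψ)⁻¹ • Ψ t) (𝓝[≠] 0) (𝓝 w)) :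
    v + w ∈ relTangentCone X Y := by
  set p := holOrder Φ with hp
  set q := holOrder Ψ with hq
  have contΦ : ContinuousAt Φ 0 :=
    (hΦ.continuousOn).continuousAt (Metric.ball_mem_nhds 0 hr)
  have contΨ : ContinuousAt Ψ 0 :=
    (hΨ.continuousOn).continuousAt (Metric.ball_mem_nhds 0 hr)
  -- the basic sequence
  set c : ℝ := min r 1 / 2 with hc
  have hc0 : 0 < c := by positivity
  have hcr : c < r := by
    have : c < min r 1 := by
      have : 0 < min r 1 := by positivity
      linarith
    exact lt_of_lt_of_le this (min_le_left _ _)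
  have hc1 : c < 1 := by
    have : c < min r 1 := by
      have : 0 < min r 1 := by positivity
      linarith
    exact lt_of_lt_of_le this (min_le_right _ _)
  set t : ℕ → ℂ := fun ν => ((c / (ν + 1) : ℝ) : ℂ) with ht
  have htne : ∀ ν, t ν ≠ 0 := by
    intro ν
    have : (c / (ν + 1) : ℝ) ≠ 0 := by positivity
    simpa [ht] using Complex.ofReal_ne_zero.mpr this
  have htnorm : ∀ ν, ‖t ν‖ ≤ c := by
    intro ν
    have h1 : (c / (ν + 1) : ℝ) ≤ c := by
      rw [div_le_iff₀ (by positivity)]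
      nlinarith [hc0.le, (Nat.cast_nonneg ν : (0:ℝ) ≤ ν)]
    have h2 : (0:ℝ) ≤ c / (ν + 1) := by positivity
    have h3 : ‖t ν‖ = |c / (ν + 1)| := by
      rw [ht]; exact (Complex.norm_real _).trans (Real.norm_eq_abs _)
    rw [h3, abs_of_nonneg h2]; exact h1
  have htend0 : Tendsto t atTop (𝓝 0) := by
    have h1 : Tendsto (fun ν : ℕ => (c / (ν + 1) : ℝ)) atTop (𝓝 0) := by
      simpa [div_eq_mul_inv] using tendsto_const_nhds.mul (tendsto_one_div_add_atTop_nhds_zero_nat : Tendsto (fun n : ℕ => 1 / ((n : ℝ) + 1)) atTop (𝓝 0))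
    have := (Complex.continuous_ofReal.tendsto 0).comp h1
    simpa [ht, Function.comp_def] using this
  -- powers of the sequence
  have hpowmem : ∀ k : ℕ, 1 ≤ k → ∀ ν, (t ν) ^ k ∈ Metric.ball (0:ℂ) r := by
    intro k hk ν
    have h1 : ‖(t ν) ^ k‖ = ‖t ν‖ ^ k := norm_pow _ _
    have h2 : ‖t ν‖ ^ k ≤ ‖t ν‖ ^ 1 :=
      pow_le_pow_of_le_one (norm_nonneg _) (le_of_lt (lt_of_le_of_lt (htnorm ν) hc1)) hk
    have : ‖(t ν) ^ k‖ < r := by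
      rw [h1]
      calc ‖t ν‖ ^ k ≤ ‖t ν‖ ^ 1 := h2
        _ = ‖t ν‖ := pow_one _
        _ ≤ c := htnorm ν
        _ < r := hcr
    simpa [Metric.mem_ball, dist_zero_right] using this
  have hpowtend : ∀ k : ℕ, 1 ≤ k →
      Tendsto (fun ν => (t ν) ^ k) atTop (𝓝[≠] (0:ℂ)) := by
    intro k hk
    rw [tendsto_nhdsWithin_iff]
    constructor
    · have := htend0.pow k
      simpa [zero_pow (by omega : k ≠ 0)] using this
    · exact Eventually.of_forall fun ν => by
        simp [Set.mem_compl_iff, pow_eq_zero_iff (by omega : k ≠ 0), htne ν]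
  rcases Nat.eq_zero_or_pos p with hp0 | hp1
  · -- p = 0 : v = 0
    have hv0 : v = 0 := by
      have := aux_order_zero Φ contΦ hΦ0 (by rw [← hp0]; exact hv)
      simpa [neg_eq_zero] using this
    rcases Nat.eq_zero_or_pos q with hq0 | hq1
    · -- also q = 0 : w = 0
      have hw0 : w = 0 :=
        aux_order_zero Ψ contΨ hΨ0 (by rw [← hq0]; exact hw)
      refine ⟨fun _ => 0, fun _ => 0, fun _ => 0, fun _ => h0X, fun _ => h0Y,
        tendsto_const_nhds, tendsto_const_nhds, ?_⟩
      simpa [hv0, hw0] using (tendsto_const_nhds : Tendsto (fun _ : ℕ => (0 : Fin n → ℂ)) atTop _)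
    · -- q ≥ 1
      refine ⟨fun _ => 0, fun ν => Ψ (t ν), fun ν => ((t ν) ^ q)⁻¹, fun _ => h0X,
        fun ν => hΨY ⟨t ν, ?_, rfl⟩, tendsto_const_nhds, ?_, ?_⟩
      · have := hpowmem 1 le_rfl ν; simpa using this
      · have := contΨ.tendsto.comp (htend0)
        simpa [hΨ0, Function.comp_def] using this
      · have key := hw.comp (hpowtend 1 le_rfl)
        have : Tendsto (fun ν => ((t ν) ^ q)⁻¹ • Ψ (t ν)) atTop (𝓝 w) := by
          simpa [Function.comp_def, one_pow] using key
        simpa [hv0] using this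
  · rcases Nat.eq_zero_or_pos q with hq0 | hq1
    · -- q = 0 : w = 0
      have hw0 : w = 0 :=
        aux_order_zero Ψ contΨ hΨ0 (by rw [← hq0]; exact hw)
      refine ⟨fun ν => Φ (t ν), fun _ => 0, fun ν => ((t ν) ^ p)⁻¹,
        fun ν => hΦX ⟨t ν, ?_, rfl⟩, fun _ => h0Y, ?_, tendsto_const_nhds, ?_⟩
      · have := hpowmem 1 le_rfl ν; simpa using this
      · have := contΦ.tendsto.comp (htend0)
        simpa [hΦ0, Function.comp_def] using this
      · have key := hv.comp (hpowtend 1 le_rfl)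
        have h1 : Tendsto (fun ν => ((t ν) ^ p)⁻¹ • Φ (t ν)) atTop (𝓝 (-v)) := by
          simpa [Function.comp_def, one_pow] using key
        have h2 := h1.neg
        simp only [neg_neg] at h2
        have heq : (fun ν => (((t ν) ^ p)⁻¹) • ((0:Fin n → ℂ) - Φ (t ν)))
            = fun ν => -(((t ν) ^ p)⁻¹ • Φ (t ν)) := by
          funext ν; simp [smul_sub]
        rw [heq]
        simpa [hw0] using h2
    · -- p ≥ 1 and q ≥ 1 : the main case
      refine ⟨fun ν => Φ ((t ν) ^ q), fun ν => Ψ ((t ν) ^ p),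
        fun ν => ((t ν) ^ (p * q))⁻¹,
        fun ν => hΦX ⟨(t ν) ^ q, hpowmem q hq1 ν, rfl⟩,
        fun ν => hΨY ⟨(t ν) ^ p, hpowmem p hp1 ν, rfl⟩, ?_, ?_, ?_⟩
      · have hq' : Tendsto (fun ν => (t ν) ^ q) atTop (𝓝 (0:ℂ)) :=
          ((hpowtend q hq1).mono_right nhdsWithin_le_nhds)
        have := contΦ.tendsto.comp hq'
        simpa [hΦ0, Function.comp_def] using this
      · have hp' : Tendsto (fun ν => (t ν) ^ p) atTop (𝓝 (0:ℂ)) :=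
          ((hpowtend p hp1).mono_right nhdsWithin_le_nhds)
        have := contΨ.tendsto.comp hp'
        simpa [hΨ0, Function.comp_def] using this
      · have keyx : Tendsto (fun ν => ((t ν) ^ (p * q))⁻¹ • Φ ((t ν) ^ q)) atTop (𝓝 (-v)) := by
          have := hv.comp (hpowtend q hq1)
          have hrw : ∀ ν : ℕ, ((t ν) ^ q) ^ p = (t ν) ^ (p * q) := by
            intro ν; rw [← pow_mul, mul_comm]
          simpa [Function.comp_def, hrw] using this
        have keyy : Tendsto (fun ν => ((t ν) ^ (p * q))⁻¹ • Ψ ((t ν) ^ p)) atTop (𝓝 w) := by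
          have := hw.comp (hpowtend p hp1)
          have hrw : ∀ ν : ℕ, ((t ν) ^ p) ^ q = (t ν) ^ (p * q) := by
            intro ν; rw [← pow_mul]
          simpa [Function.comp_def, hrw] using this
        have := keyy.sub keyx
        have heq : (fun ν => ((t ν) ^ (p * q))⁻¹ • (Ψ ((t ν) ^ p) - Φ ((t ν) ^ q)))
            = fun ν => ((t ν) ^ (p * q))⁻¹ • Ψ ((t ν) ^ p)
              - ((t ν) ^ (p * q))⁻¹ • Φ ((t ν) ^ q) := by
          funext ν; simp [smul_sub]
        rw [heq]
        simpa [sub_neg_eq_add, add_comm] using this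
end

section
/- For the two cuspidal curves X = {(t², t³, 0) : t ∈ ℂ} and Y = {(τ², 0, τ³) : τ ∈ ℂ} in ℂ³, the relative tangent cone at the origin is C₀(X,Y) = {(x, y, z) ∈ ℂ³ : y² = z²}, i.e., the union of the two planes spanned by (1,0,0),(0,1,1) and by (1,0,0),(0,1,−1). -/
open Filter Topology

private lemma pow3_tendsto_zero {a : ℕ → ℝ} (ha : ∀ n, 0 ≤ a n)
    (h : Tendsto (fun n => a n ^ 3) atTop (𝓝 0)) : Tendsto a atTop (𝓝 0) := by
  rw [Metric.tendsto_atTop] at h ⊢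
  intro ε hε
  obtain ⟨N, hN⟩ := h (ε ^ 3) (by positivity)
  refine ⟨N, fun n hn => ?_⟩
  have hthis := hN n hn
  rw [Real.dist_eq] at hthis ⊢
  simp only [sub_zero] at hthis ⊢
  rw [abs_of_nonneg (pow_nonneg (ha n) 3)] at hthis
  rw [abs_of_nonneg (ha n)]
  exact lt_of_pow_lt_pow_left₀ 3 (le_of_lt hε) hthis

private lemma cube_tendsto_zero {t : ℕ → ℂ}
    (h : Tendsto (fun n => t n ^ 3) atTop (𝓝 0)) : Tendsto t atTop (𝓝 0) := by
  rw [tendsto_zero_iff_norm_tendsto_zero] at h ⊢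
  apply pow3_tendsto_zero (fun n => norm_nonneg _)
  simpa [norm_pow] using h

private lemma inv_norm_tendsto {lam s : ℕ → ℂ} {A : ℂ} (hA : A ≠ 0)
    (hs : Tendsto s atTop (𝓝 0))
    (h : Tendsto (fun ν => lam ν * s ν ^ 3) atTop (𝓝 A)) :
    Tendsto (fun ν => ‖lam ν‖⁻¹) atTop (𝓝 0) := by
  have hApos : 0 < ‖A‖ := norm_pos_iff.2 hA
  have hAne : ‖A‖ ≠ 0 := ne_of_gt hApos
  have hev : ∀ᶠ ν in atTop, ‖A‖ / 2 < ‖lam ν * s ν ^ 3‖ :=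
    h.norm.eventually_const_lt (by linarith)
  have hsn : Tendsto (fun ν => ‖s ν‖ ^ 3 * (2 / ‖A‖)) atTop (𝓝 0) := by
    have := (hs.norm.pow 3).mul_const (2 / ‖A‖)
    simpa using this
  apply squeeze_zero' (Eventually.of_forall (fun ν => inv_nonneg.2 (norm_nonneg _))) ?_ hsn
  filter_upwards [hev] with ν hν
  have hl : lam ν ≠ 0 := by
    intro h0
    rw [h0] at hν
    simp only [zero_mul, norm_zero] at hν
    exact absurd hν (not_lt.2 (by positivity))
  have h1 : 0 < ‖lam ν‖ := norm_pos_iff.2 hl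
  rw [norm_mul, norm_pow] at hν
  have h2 : ‖A‖ / 2 * ‖lam ν‖⁻¹ < ‖lam ν‖ * ‖s ν‖ ^ 3 * ‖lam ν‖⁻¹ :=
    mul_lt_mul_of_pos_right hν (inv_pos.2 h1)
  rw [mul_comm (‖lam ν‖) _, mul_assoc, mul_inv_cancel₀ (ne_of_gt h1), mul_one] at h2
  have hone : ‖A‖ / 2 * (2 / ‖A‖) = 1 := by
    rw [div_mul_div_comm, mul_comm]
    exact div_self (by positivity)
  calc ‖lam ν‖⁻¹ = ‖A‖ / 2 * ‖lam ν‖⁻¹ * (2 / ‖A‖) := by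
        rw [mul_comm (‖A‖ / 2) _, mul_assoc, hone, mul_one]
    _ ≤ ‖s ν‖ ^ 3 * (2 / ‖A‖) := mul_le_mul_of_nonneg_right h2.le (by positivity)

private lemma key_lemma {lam t τ : ℕ → ℂ} {A B C : ℂ}
    (ht : Tendsto t atTop (𝓝 0)) (hτ : Tendsto τ atTop (𝓝 0))
    (hA : Tendsto (fun ν => lam ν * τ ν ^ 3) atTop (𝓝 A))
    (hB : Tendsto (fun ν => lam ν * t ν ^ 3) atTop (𝓝 B))
    (hC : Tendsto (fun ν => lam ν * (τ ν ^ 2 - t ν ^ 2)) atTop (𝓝 C))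
    (hinv : Tendsto (fun ν => ‖lam ν‖⁻¹) atTop (𝓝 0)) :
    A ^ 2 = B ^ 2 := by
  have h1 : Tendsto (fun ν => (lam ν * τ ν ^ 3) ^ 2 - (lam ν * t ν ^ 3) ^ 2) atTop
      (𝓝 (A ^ 2 - B ^ 2)) := (hA.pow 2).sub (hB.pow 2)
  have hmid : Tendsto (fun ν => lam ν * τ ν ^ 2 * t ν ^ 2) atTop (𝓝 0) := by
    rw [tendsto_zero_iff_norm_tendsto_zero]
    apply pow3_tendsto_zero (fun ν => norm_nonneg _)
    have heq : (fun ν => ‖lam ν * τ ν ^ 2 * t ν ^ 2‖ ^ 3)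
        = fun ν => ‖lam ν * τ ν ^ 3‖ ^ 2 * ‖lam ν * t ν ^ 3‖ ^ 2 * ‖lam ν‖⁻¹ := by
      funext ν
      by_cases h0 : lam ν = 0
      · simp [h0]
      · have hne : ‖lam ν‖ ≠ 0 := norm_ne_zero_iff.2 h0
        have hne' : (‖lam ν‖) ≠ 0 := hne
        simp only [norm_mul, norm_pow]
        field_simp
    rw [heq]
    have := ((hA.norm.pow 2).mul (hB.norm.pow 2)).mul hinv
    simpa using this
  have h2 : Tendsto (fun ν => (lam ν * τ ν ^ 3) ^ 2 - (lam ν * t ν ^ 3) ^ 2) atTop (𝓝 0) := by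
    have heq : (fun ν => (lam ν * τ ν ^ 3) ^ 2 - (lam ν * t ν ^ 3) ^ 2)
        = fun ν => (lam ν * (τ ν ^ 2 - t ν ^ 2)) *
            ((lam ν * τ ν ^ 3) * τ ν + lam ν * τ ν ^ 2 * t ν ^ 2 + (lam ν * t ν ^ 3) * t ν) := by
      funext ν; ring
    rw [heq]
    have := hC.mul (((hA.mul hτ).add hmid).add (hB.mul ht))
    simpa using this
  exact sub_eq_zero.1 (tendsto_nhds_unique h1 h2)

private lemma u_tendsto : Tendsto (fun ν : ℕ => (((ν : ℂ) + 1))⁻¹) atTop (𝓝 0) := by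
  rw [tendsto_zero_iff_norm_tendsto_zero]
  have h : (fun ν : ℕ => ‖((ν : ℂ) + 1)⁻¹‖) = fun ν : ℕ => 1 / ((ν : ℝ) + 1) := by
    funext ν
    rw [norm_inv]
    norm_num
    rw [show ((ν : ℂ) + 1) = ((ν + 1 : ℕ) : ℂ) by push_cast; ring]
    rw [Complex.norm_natCast]
    push_cast; ring
  rw [h]
  exact tendsto_one_div_add_atTop_nhds_zero_nat

theorem stmt9 :
    relTangentCone
      {v : Fin 3 → ℂ | ∃ t : ℂ, v = ![t ^ 2, t ^ 3, 0]}
      {v : Fin 3 → ℂ | ∃ τ : ℂ, v = ![τ ^ 2, 0, τ ^ 3]}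
    = {v : Fin 3 → ℂ | v 1 ^ 2 = v 2 ^ 2} := by
  ext v
  simp only [relTangentCone, Set.mem_setOf_eq]
  constructor
  · rintro ⟨x, y, lam, hxX, hyY, hx0, hy0, hlim⟩
    choose t ht using hxX
    choose τ hτ using hyY
    rw [tendsto_pi_nhds] at hx0 hy0 hlim
    have ht3 : Tendsto (fun ν => t ν ^ 3) atTop (𝓝 0) := by
      have h := hx0 1
      have heq : (fun ν => x ν 1) = fun ν => t ν ^ 3 := funext fun ν => by rw [ht ν]; simp
      rw [heq] at h
      simpa using h
    have hτ3 : Tendsto (fun ν => τ ν ^ 3) atTop (𝓝 0) := by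
      have h := hy0 2
      have heq : (fun ν => y ν 2) = fun ν => τ ν ^ 3 := funext fun ν => by rw [hτ ν]; simp
      rw [heq] at h
      simpa using h
    have ht0 : Tendsto t atTop (𝓝 0) := cube_tendsto_zero ht3
    have hτ0 : Tendsto τ atTop (𝓝 0) := cube_tendsto_zero hτ3
    have comp2 : Tendsto (fun ν => lam ν * τ ν ^ 3) atTop (𝓝 (v 2)) := by
      have h := hlim 2
      have heq : (fun ν => (lam ν • (y ν - x ν)) 2) = fun ν => lam ν * τ ν ^ 3 :=
        funext fun ν => by rw [Pi.smul_apply, Pi.sub_apply, ht ν, hτ ν]; simp [smul_eq_mul]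
      rwa [heq] at h
    have comp1 : Tendsto (fun ν => lam ν * t ν ^ 3) atTop (𝓝 (-(v 1))) := by
      have h := hlim 1
      have heq : (fun ν => (lam ν • (y ν - x ν)) 1) = fun ν => -(lam ν * t ν ^ 3) :=
        funext fun ν => by rw [Pi.smul_apply, Pi.sub_apply, ht ν, hτ ν]; simp [smul_eq_mul]
      rw [heq] at h
      simpa using h.neg
    have comp0 : Tendsto (fun ν => lam ν * (τ ν ^ 2 - t ν ^ 2)) atTop (𝓝 (v 0)) := by
      have h := hlim 0
      have heq : (fun ν => (lam ν • (y ν - x ν)) 0) = fun ν => lam ν * (τ ν ^ 2 - t ν ^ 2) :=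
        funext fun ν => by rw [Pi.smul_apply, Pi.sub_apply, ht ν, hτ ν]; simp [smul_eq_mul]
      rwa [heq] at h
    by_cases h2 : v 2 = 0
    · by_cases h1 : v 1 = 0
      · rw [h1, h2]
      · have hinv := inv_norm_tendsto (neg_ne_zero.2 h1) ht0 comp1
        have hk := key_lemma ht0 hτ0 comp2 comp1 comp0 hinv
        rw [hk]; ring
    · have hinv := inv_norm_tendsto h2 hτ0 comp2
      have hk := key_lemma ht0 hτ0 comp2 comp1 comp0 hinv
      rw [hk]; ring
  · intro hv
    set u : ℕ → ℂ := fun ν => ((ν : ℂ) + 1)⁻¹ with hu_def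
    have hu0 : Tendsto u atTop (𝓝 0) := u_tendsto
    have hune : ∀ ν, u ν ≠ 0 := fun ν => inv_ne_zero (Nat.cast_add_one_ne_zero ν)
    by_cases h1 : v 1 = 0
    · have h2 : v 2 = 0 := by
        have h2sq : v 2 ^ 2 = 0 := by rw [← hv, h1]; ring
        exact (pow_eq_zero_iff two_ne_zero).1 h2sq
      obtain ⟨d, hd⟩ : ∃ d : ℂ, d ^ 2 = v 0 := IsAlgClosed.exists_pow_nat_eq _ zero_lt_two
      refine ⟨fun _ => ![(0:ℂ) ^ 2, (0:ℂ) ^ 3, 0],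
        fun ν => ![(d * u ν) ^ 2, 0, (d * u ν) ^ 3],
        fun ν => ((u ν)⁻¹) ^ 2, fun ν => ⟨0, rfl⟩, fun ν => ⟨d * u ν, rfl⟩, ?_, ?_, ?_⟩
      · have : (![(0:ℂ) ^ 2, (0:ℂ) ^ 3, 0] : Fin 3 → ℂ) = 0 := by
          funext i; fin_cases i <;> simp
        rw [this]; exact tendsto_const_nhds
      · rw [tendsto_pi_nhds]
        intro i
        fin_cases i
        · simpa using ((hu0.const_mul d).pow 2)
        · exact tendsto_const_nhds
        · simpa using ((hu0.const_mul d).pow 3)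
      · rw [tendsto_pi_nhds]
        intro i
        fin_cases i
        · refine Tendsto.congr (f₁ := fun _ : ℕ => v 0) (fun ν => ?_) tendsto_const_nhds
          have hu := hune ν
          simp only [Pi.smul_apply, Pi.sub_apply, smul_eq_mul]
          rw [← hd]
          norm_num
          field_simp
        · refine Tendsto.congr (f₁ := fun _ : ℕ => v 1) (fun ν => ?_) tendsto_const_nhds
          simp only [Pi.smul_apply, Pi.sub_apply, smul_eq_mul]
          rw [h1]
          norm_num
        · refine Tendsto.congr (f₁ := fun ν : ℕ => d ^ 3 * u ν) (fun ν => ?_) ?_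
          · have hu := hune ν
            simp only [Pi.smul_apply, Pi.sub_apply, smul_eq_mul]
            norm_num
            field_simp
          · show Tendsto (fun ν : ℕ => d ^ 3 * u ν) atTop (𝓝 (v 2))
            rw [h2]
            simpa using hu0.const_mul (d ^ 3)
    · obtain ⟨a, ha⟩ : ∃ a : ℂ, a ^ 3 = -v 1 :=
        IsAlgClosed.exists_pow_nat_eq _ (by norm_num)
      have hane : a ≠ 0 := by
        intro h0
        rw [h0] at ha
        exact h1 (by simpa using ha.symm)
      obtain ⟨c, hc3, hc2, hcne⟩ : ∃ c : ℂ, c ^ 3 = v 2 ∧ c ^ 2 = a ^ 2 ∧ c ≠ 0 := by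
        have hfac : (v 2 - v 1) * (v 2 + v 1) = 0 := by linear_combination -hv
        rcases mul_eq_zero.1 hfac with h | h
        · rw [sub_eq_zero] at h
          exact ⟨-a, by rw [h]; linear_combination -ha, by ring, neg_ne_zero.2 hane⟩
        · exact ⟨a, by rw [ha, (eq_neg_of_add_eq_zero_left h)], by ring, hane⟩
      set d : ℂ := v 0 / (2 * c) with hd_def
      refine ⟨fun ν => ![(a * u ν) ^ 2, (a * u ν) ^ 3, 0],
        fun ν => ![(c * u ν + d * u ν ^ 2) ^ 2, 0, (c * u ν + d * u ν ^ 2) ^ 3],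
        fun ν => ((u ν)⁻¹) ^ 3,
        fun ν => ⟨a * u ν, rfl⟩, fun ν => ⟨c * u ν + d * u ν ^ 2, rfl⟩, ?_, ?_, ?_⟩
      · rw [tendsto_pi_nhds]
        intro i
        fin_cases i
        · simpa using ((hu0.const_mul a).pow 2)
        · simpa using ((hu0.const_mul a).pow 3)
        · exact tendsto_const_nhds
      · rw [tendsto_pi_nhds]
        intro i
        have hy' : Tendsto (fun ν => c * u ν + d * u ν ^ 2) atTop (𝓝 0) := by
          simpa using (hu0.const_mul c).add ((hu0.pow 2).const_mul d)
        fin_cases i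
        · simpa using hy'.pow 2
        · exact tendsto_const_nhds
        · simpa using hy'.pow 3
      · rw [tendsto_pi_nhds]
        intro i
        fin_cases i
        · refine Tendsto.congr (f₁ := fun ν : ℕ => 2 * c * d + d ^ 2 * u ν)
            (fun ν => ?_) ?_
          · have hu := hune ν
            simp only [Pi.smul_apply, Pi.sub_apply, smul_eq_mul]
            norm_num
            field_simp
            linear_combination (-1 : ℂ) * hc2
          · show Tendsto (fun ν : ℕ => 2 * c * d + d ^ 2 * u ν) atTop (𝓝 (v 0))
            have h2cd : 2 * c * d = v 0 := by
              rw [hd_def]; field_simp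
            rw [show (v 0) = 2 * c * d + d ^ 2 * 0 from by rw [h2cd]; ring]
            exact tendsto_const_nhds.add (hu0.const_mul (d ^ 2))
        · refine Tendsto.congr (f₁ := fun _ : ℕ => v 1) (fun ν => ?_) tendsto_const_nhds
          have hu := hune ν
          simp only [Pi.smul_apply, Pi.sub_apply, smul_eq_mul]
          norm_num
          field_simp
          linear_combination ha
        · refine Tendsto.congr (f₁ := fun ν : ℕ => (c + d * u ν) ^ 3) (fun ν => ?_) ?_
          · have hu := hune ν
            simp only [Pi.smul_apply, Pi.sub_apply, smul_eq_mul]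
            norm_num
            field_simp
          · show Tendsto (fun ν : ℕ => (c + d * u ν) ^ 3) atTop (𝓝 (v 2))
            have hT : Tendsto (fun ν => (c + d * u ν) ^ 3) atTop (𝓝 ((c + d * 0) ^ 3)) :=
              (tendsto_const_nhds.add (hu0.const_mul d)).pow 3
            simpa [hc3] using hT
end

section
/- The relative tangent cone of parametrized curves with common tangent line is invariant under adding tangent directions: let Φ(t) = (t^k, φ₂(t), …, φₙ(t)) and Ψ(τ) = (τ^l, ψ₂(τ), …, ψₙ(τ)) be injective holomorphic maps on K(r) with all ord φᵢ > k and ord ψᵢ > l, and let X = Φ(K(r)), Y = Ψ(K(r)). Then C₀(X,Y) + ℂ·e₁ = C₀(X,Y), where e₁ = (1,0,…,0). -/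
open Filter Topology

lemma tendsto_of_pow_tendsto {z : ℕ → ℂ} {k : ℕ} (hk : 0 < k)
    (h : Tendsto (fun ν => (z ν) ^ k) atTop (𝓝 0)) : Tendsto z atTop (𝓝 0) := by
  rw [NormedAddCommGroup.tendsto_nhds_zero] at h ⊢
  intro ε hε
  filter_upwards [h (ε ^ k) (pow_pos hε k)] with ν hν
  have : ‖z ν‖ ^ k < ε ^ k := by rwa [← norm_pow]
  exact lt_of_pow_lt_pow_left₀ k hε.le this

lemma vanish_rep {f : ℂ → ℂ} (hf : AnalyticAt ℂ f 0) {l : ℕ}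
    (h : ∀ m ≤ l, iteratedDeriv m f 0 = 0) :
    ∃ g : ℂ → ℂ, AnalyticAt ℂ g 0 ∧ ∀ t, f t = t ^ (l + 1) * g t := by
  obtain ⟨p, hp⟩ := hf
  -- coefficients vanish
  have hcoeff : ∀ m ≤ l, p.coeff m = 0 := by
    intro m hm
    obtain ⟨R, hR⟩ := hp
    have hfac := hR.factorial_smul (y := (1:ℂ)) m
    rw [← iteratedDeriv_eq_iteratedFDeriv, h m hm] at hfac
    have h0 : m.factorial • p.coeff m = 0 := hfac
    have : (m.factorial : ℂ) * p.coeff m = 0 := by rwa [nsmul_eq_mul] at h0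
    rcases mul_eq_zero.mp this with h'|h'
    · exact absurd h' (by exact_mod_cast m.factorial_ne_zero)
    · exact h'
  -- iterated dslope values vanish
  have hval : ∀ j ≤ l, (Function.swap dslope 0)^[j] f 0 = 0 := by
    intro j hj
    have h2 : (FormalMultilinearSeries.fslope^[j] p).coeff 0 = (Function.swap dslope 0)^[j] f 0 :=
      (hp.has_fpower_series_iterate_dslope_fslope j).coeff_zero 1
    rw [FormalMultilinearSeries.coeff_iterate_fslope, zero_add] at h2
    rw [← h2, hcoeff j hj]
  refine ⟨(Function.swap dslope 0)^[l + 1] f, (hp.has_fpower_series_iterate_dslope_fslope (l+1)).analyticAt, ?_⟩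
  have key : ∀ j ≤ l + 1, ∀ t, f t = t ^ j * (Function.swap dslope 0)^[j] f t := by
    intro j hj
    induction j with
    | zero => simp
    | succ j ih =>
      intro t
      have hjl : j ≤ l := Nat.lt_succ_iff.mp hj
      rw [ih (Nat.le_of_succ_le hj) t, Function.iterate_succ_apply']
      have hd := sub_smul_dslope ((Function.swap dslope 0)^[j] f) 0 t
      rw [hval j hjl, sub_zero, sub_zero, smul_eq_mul] at hd
      rw [show Function.swap dslope 0 ((Function.swap dslope 0)^[j] f) = dslope ((Function.swap dslope 0)^[j] f) 0 from rfl, ← hd]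
      ring
  exact key (l + 1) le_rfl

lemma root_u_est {l : ℕ} (hl : 0 < l) {w : ℂ} (hw : ‖w‖ ≤ 1/2) :
    ‖(1 + w) ^ ((l:ℂ)⁻¹) - 1‖ ≤ 4 * ‖w‖ ∧ ‖(1 + w) ^ ((l:ℂ)⁻¹)‖ ≤ 5/2 := by
  have h1w : (1 : ℂ) + w ≠ 0 := by
    intro h
    have hw1 : w = -1 := by linear_combination h
    rw [hw1] at hw
    simp at hw
    linarith
  have hlog : ‖Complex.log (1 + w)‖ ≤ (3/2) * ‖w‖ := Complex.norm_log_one_add_half_le_self hw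
  set s : ℂ := Complex.log (1 + w) * (l:ℂ)⁻¹ with hs
  have hinv : ‖((l:ℂ))⁻¹‖ ≤ 1 := by
    rw [norm_inv]
    have : (1:ℝ) ≤ ‖(l:ℂ)‖ := by
      simp only [Complex.norm_natCast]
      exact_mod_cast hl
    rw [inv_le_one_iff₀]; right; exact this
  have hsnorm : ‖s‖ ≤ (3/2) * ‖w‖ := by
    rw [hs, norm_mul]
    calc ‖Complex.log (1+w)‖ * ‖((l:ℂ))⁻¹‖ ≤ ((3/2) * ‖w‖) * 1 :=
          mul_le_mul hlog hinv (norm_nonneg _) (by positivity)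
      _ = (3/2) * ‖w‖ := by ring
  have hs1 : ‖s‖ ≤ 1 := by linarith [norm_nonneg w]
  have hu : (1 + w) ^ ((l:ℂ)⁻¹) = Complex.exp s := by
    rw [Complex.cpow_def_of_ne_zero h1w]
  have hexp : ‖Complex.exp s - 1‖ ≤ 2 * ‖s‖ := by
    have := Complex.norm_exp_sub_one_le (x := s) hs1
    simpa using this
  constructor
  · rw [hu]
    calc ‖Complex.exp s - 1‖ ≤ 2 * ‖s‖ := hexp
      _ ≤ 2 * ((3/2) * ‖w‖) := by linarith
      _ ≤ 4 * ‖w‖ := by linarith [norm_nonneg w]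
  · rw [hu]
    calc ‖Complex.exp s‖ = ‖(Complex.exp s - 1) + 1‖ := by ring_nf
      _ ≤ ‖Complex.exp s - 1‖ + ‖(1:ℂ)‖ := norm_add_le _ _
      _ ≤ 2 * ((3/2)*‖w‖) + 1 := by simp only [norm_one]; linarith
      _ ≤ 5/2 := by linarith

set_option maxHeartbeats 1000000 in
lemma key_est {l : ℕ} (hl : 0 < l) {f g : ℂ → ℂ} {K M ε : ℝ} (hK : 0 ≤ K) (hM : 0 ≤ M)
    (hrep : ∀ z, f z = z ^ (l + 1) * g z)
    (hgK : ∀ a b : ℂ, ‖a‖ < ε → ‖b‖ < ε → ‖g a - g b‖ ≤ K * ‖a - b‖)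
    (hgM : ∀ a : ℂ, ‖a‖ < ε → ‖g a‖ ≤ M)
    {lam τ σ d c : ℂ} (hlamd : ‖lam‖ * ‖d‖ ≤ ‖c‖)
    (hσl : σ ^ l = τ ^ l + d)
    (hbr : (τ ≠ 0 ∧ ‖d‖ * 2 ≤ ‖τ‖ ^ l ∧ σ = τ * (1 + d / τ ^ l) ^ ((l:ℂ)⁻¹))
            ∨ ‖τ‖ ^ l ≤ 2 * ‖d‖)
    (hτε : ‖τ‖ < ε) (hσε : ‖σ‖ < ε) (hτ1 : ‖τ‖ ≤ 1) :
    ‖lam * (f σ - f τ)‖ ≤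
      (‖c‖ * (4 * (((l:ℝ)+1) * (5/2)^l * M + K) + 3 * M) + 1) * (‖σ‖ + ‖τ‖) := by
  have hgσ : ‖g σ‖ ≤ M := hgM σ hσε
  have hgτ : ‖g τ‖ ≤ M := hgM τ hτε
  have hcn : (0:ℝ) ≤ ‖c‖ := norm_nonneg _
  have hLn : (0:ℝ) ≤ ‖lam‖ := norm_nonneg _
  have hDn : (0:ℝ) ≤ ‖d‖ := norm_nonneg _
  have hτn : (0:ℝ) ≤ ‖τ‖ := norm_nonneg _
  have hσn : (0:ℝ) ≤ ‖σ‖ := norm_nonneg _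
  have hGn : (0:ℝ) ≤ ((l:ℝ)+1) * (5/2)^l * M := by positivity
  have hG4 : (0:ℝ) ≤ 4 * (((l:ℝ)+1) * (5/2)^l * M + K) := by linarith
  have hcoef : (0:ℝ) ≤ ‖c‖ * (4 * (((l:ℝ)+1) * (5/2)^l * M + K) + 3 * M) + 1 := by
    have := mul_nonneg hcn (by linarith : (0:ℝ) ≤ 4 * (((l:ℝ)+1) * (5/2)^l * M + K) + 3 * M)
    linarith
  rcases hbr with ⟨hτ0, hdτ, hσdef⟩ | h2
  · -- branch 1
    have hτpos : (0:ℝ) < ‖τ‖ := norm_pos_iff.mpr hτ0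
    set w : ℂ := d / τ ^ l with hw
    have hwn : ‖w‖ = ‖d‖ / ‖τ‖ ^ l := by rw [hw, norm_div, norm_pow]
    have hτl : (0:ℝ) < ‖τ‖ ^ l := pow_pos hτpos l
    have hwhalf : ‖w‖ ≤ 1/2 := by rw [hwn, div_le_iff₀ hτl]; linarith
    obtain ⟨hu1, hu2⟩ := root_u_est hl hwhalf
    set u : ℂ := (1 + w) ^ ((l:ℂ)⁻¹) with hu
    have hσu : σ = τ * u := hσdef
    have hun : (0:ℝ) ≤ ‖u - 1‖ := norm_nonneg _
    -- geometric sum bound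
    have hgeom : ‖u ^ (l+1) - 1‖ ≤ ((l:ℝ)+1) * (5/2)^l * ‖u - 1‖ := by
      have hid := geom_sum_mul u (l+1)
      calc ‖u ^ (l+1) - 1‖ = ‖(∑ i ∈ Finset.range (l+1), u ^ i) * (u - 1)‖ := by rw [hid]
        _ = ‖∑ i ∈ Finset.range (l+1), u ^ i‖ * ‖u - 1‖ := norm_mul _ _
        _ ≤ (((l:ℝ)+1) * (5/2)^l) * ‖u - 1‖ := by
            apply mul_le_mul_of_nonneg_right _ hun
            calc ‖∑ i ∈ Finset.range (l+1), u ^ i‖ ≤ ∑ i ∈ Finset.range (l+1), ‖u ^ i‖ :=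
                  norm_sum_le _ _
              _ ≤ ∑ i ∈ Finset.range (l+1), (5/2:ℝ)^l := by
                  apply Finset.sum_le_sum
                  intro i hi
                  rw [norm_pow]
                  calc ‖u‖ ^ i ≤ (5/2:ℝ) ^ i :=
                        pow_le_pow_left₀ (norm_nonneg u) hu2 i
                    _ ≤ (5/2:ℝ) ^ l :=
                        pow_le_pow_right₀ (by norm_num)
                          (Nat.lt_succ_iff.mp (Finset.mem_range.mp hi))
              _ = ((l:ℝ)+1) * (5/2)^l := by
                  rw [Finset.sum_const, Finset.card_range]
                  push_cast; ring
    -- identity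
    have hfid : f σ - f τ = τ^(l+1) * (u^(l+1) - 1) * g σ + τ^(l+1) * (g σ - g τ) := by
      rw [hrep σ, hrep τ, hσu]; ring
    have hkey : ‖τ‖^(l+1) * ‖w‖ = ‖τ‖ * ‖d‖ := by
      have hdc : ‖d‖ / ‖τ‖ ^ l * ‖τ‖ ^ l = ‖d‖ := div_mul_cancel₀ _ hτl.ne'
      rw [hwn]
      calc ‖τ‖^(l+1) * (‖d‖ / ‖τ‖ ^ l) = (‖d‖ / ‖τ‖ ^ l * ‖τ‖ ^ l) * ‖τ‖ := by ring
        _ = ‖d‖ * ‖τ‖ := by rw [hdc]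
        _ = ‖τ‖ * ‖d‖ := by ring
    have hστdist : ‖σ - τ‖ ≤ 4 * ‖τ‖ * ‖w‖ := by
      have : σ - τ = τ * (u - 1) := by rw [hσu]; ring
      rw [this, norm_mul]
      nlinarith
    have hgd : ‖g σ - g τ‖ ≤ K * (4 * ‖τ‖ * ‖w‖) := by
      calc ‖g σ - g τ‖ ≤ K * ‖σ - τ‖ := hgK σ τ hσε hτε
        _ ≤ K * (4 * ‖τ‖ * ‖w‖) := mul_le_mul_of_nonneg_left hστdist hK
    have hA : ‖τ^(l+1) * (u^(l+1) - 1) * g σ‖ ≤ 4 * (((l:ℝ)+1) * (5/2)^l) * M * (‖τ‖ * ‖d‖) := by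
      rw [norm_mul, norm_mul, norm_pow]
      calc ‖τ‖^(l+1) * ‖u^(l+1) - 1‖ * ‖g σ‖
          ≤ ‖τ‖^(l+1) * (((l:ℝ)+1) * (5/2)^l * (4 * ‖w‖)) * M := by
            apply mul_le_mul _ hgσ (norm_nonneg _) (by positivity)
            apply mul_le_mul_of_nonneg_left _ (by positivity)
            calc ‖u^(l+1) - 1‖ ≤ ((l:ℝ)+1) * (5/2)^l * ‖u - 1‖ := hgeom
              _ ≤ ((l:ℝ)+1) * (5/2)^l * (4 * ‖w‖) := by
                  apply mul_le_mul_of_nonneg_left hu1 (by positivity)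
        _ = 4 * (((l:ℝ)+1) * (5/2)^l) * M * (‖τ‖^(l+1) * ‖w‖) := by ring
        _ = 4 * (((l:ℝ)+1) * (5/2)^l) * M * (‖τ‖ * ‖d‖) := by rw [hkey]
    have hB : ‖τ^(l+1) * (g σ - g τ)‖ ≤ 4 * K * (‖τ‖ * ‖d‖) := by
      rw [norm_mul, norm_pow]
      calc ‖τ‖^(l+1) * ‖g σ - g τ‖ ≤ ‖τ‖^(l+1) * (K * (4 * ‖τ‖ * ‖w‖)) := by
            apply mul_le_mul_of_nonneg_left hgd (by positivity)
        _ = 4 * K * ‖τ‖ * (‖τ‖^(l+1) * ‖w‖) := by ring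
        _ = 4 * K * ‖τ‖ * (‖τ‖ * ‖d‖) := by rw [hkey]
        _ ≤ 4 * K * (‖τ‖ * ‖d‖) := by
            nlinarith [mul_nonneg (mul_nonneg hK (mul_nonneg hτn hDn)) (sub_nonneg.mpr hτ1)]
    calc ‖lam * (f σ - f τ)‖ = ‖lam‖ * ‖f σ - f τ‖ := norm_mul _ _
      _ ≤ ‖lam‖ * (4 * (((l:ℝ)+1) * (5/2)^l) * M * (‖τ‖ * ‖d‖) + 4 * K * (‖τ‖ * ‖d‖)) := by
          apply mul_le_mul_of_nonneg_left _ hLn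
          rw [hfid]
          exact le_trans (norm_add_le _ _) (add_le_add hA hB)
      _ = (4 * (((l:ℝ)+1) * (5/2)^l * M + K)) * (‖lam‖ * ‖d‖) * ‖τ‖ := by ring
      _ ≤ (4 * (((l:ℝ)+1) * (5/2)^l * M + K)) * ‖c‖ * ‖τ‖ := by
          apply mul_le_mul_of_nonneg_right _ hτn
          apply mul_le_mul_of_nonneg_left hlamd hG4
      _ = (‖c‖ * (4 * (((l:ℝ)+1) * (5/2)^l * M + K))) * ‖τ‖ := by ring
      _ ≤ (‖c‖ * (4 * (((l:ℝ)+1) * (5/2)^l * M + K) + 3 * M) + 1) * ‖τ‖ := by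
          apply mul_le_mul_of_nonneg_right _ hτn
          have h3 : (0:ℝ) ≤ ‖c‖ * (3 * M) := mul_nonneg hcn (by linarith)
          nlinarith []
      _ ≤ (‖c‖ * (4 * (((l:ℝ)+1) * (5/2)^l * M + K) + 3 * M) + 1) * (‖σ‖ + ‖τ‖) := by
          apply mul_le_mul_of_nonneg_left _ hcoef
          linarith
  · -- branch 2
    have hσl3 : ‖σ‖ ^ l ≤ 3 * ‖d‖ := by
      have h1 : ‖σ‖ ^ l = ‖σ ^ l‖ := (norm_pow _ _).symm
      rw [h1, hσl]
      calc ‖τ ^ l + d‖ ≤ ‖τ ^ l‖ + ‖d‖ := norm_add_le _ _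
        _ = ‖τ‖ ^ l + ‖d‖ := by rw [norm_pow]
        _ ≤ 3 * ‖d‖ := by linarith
    have hfσ : ‖f σ‖ ≤ 3 * ‖d‖ * ‖σ‖ * M := by
      rw [hrep σ, norm_mul, norm_pow, pow_succ]
      calc ‖σ‖ ^ l * ‖σ‖ * ‖g σ‖ ≤ (3 * ‖d‖) * ‖σ‖ * M := by
            apply mul_le_mul _ hgσ (norm_nonneg _) (by positivity)
            exact mul_le_mul_of_nonneg_right hσl3 hσn
        _ = 3 * ‖d‖ * ‖σ‖ * M := by ring
    have hfτ : ‖f τ‖ ≤ 2 * ‖d‖ * ‖τ‖ * M := by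
      rw [hrep τ, norm_mul, norm_pow, pow_succ]
      calc ‖τ‖ ^ l * ‖τ‖ * ‖g τ‖ ≤ (2 * ‖d‖) * ‖τ‖ * M := by
            apply mul_le_mul _ hgτ (norm_nonneg _) (by positivity)
            exact mul_le_mul_of_nonneg_right h2 hτn
        _ = 2 * ‖d‖ * ‖τ‖ * M := by ring
    calc ‖lam * (f σ - f τ)‖ = ‖lam‖ * ‖f σ - f τ‖ := norm_mul _ _
      _ ≤ ‖lam‖ * (3 * ‖d‖ * ‖σ‖ * M + 2 * ‖d‖ * ‖τ‖ * M) := by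
          apply mul_le_mul_of_nonneg_left _ hLn
          exact le_trans (norm_sub_le _ _) (add_le_add hfσ hfτ)
      _ = (‖lam‖ * ‖d‖) * M * (3 * ‖σ‖ + 2 * ‖τ‖) := by ring
      _ ≤ ‖c‖ * M * (3 * ‖σ‖ + 2 * ‖τ‖) := by
          apply mul_le_mul_of_nonneg_right (mul_le_mul_of_nonneg_right hlamd hM) (by positivity)
      _ ≤ ‖c‖ * M * (3 * (‖σ‖ + ‖τ‖)) := by
          apply mul_le_mul_of_nonneg_left _ (mul_nonneg hcn hM)
          linarith
      _ = (3 * (‖c‖ * M)) * (‖σ‖ + ‖τ‖) := by ring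
      _ ≤ (‖c‖ * (4 * (((l:ℝ)+1) * (5/2)^l * M + K) + 3 * M) + 1) * (‖σ‖ + ‖τ‖) := by
          apply mul_le_mul_of_nonneg_right _ (add_nonneg hσn hτn)
          nlinarith [mul_nonneg hcn hG4]
lemma comp_pack {f : ℂ → ℂ} (hf : AnalyticAt ℂ f 0) {l : ℕ}
    (hord : ∀ m ≤ l, iteratedDeriv m f 0 = 0) :
    ∃ g : ℂ → ℂ, AnalyticAt ℂ g 0 ∧ (∀ z, f z = z ^ (l + 1) * g z) ∧
      ∃ ε K M : ℝ, 0 < ε ∧ 0 ≤ K ∧ 0 ≤ M ∧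
        (∀ a b : ℂ, ‖a‖ < ε → ‖b‖ < ε → ‖g a - g b‖ ≤ K * ‖a - b‖) ∧
        (∀ a : ℂ, ‖a‖ < ε → ‖g a‖ ≤ M) := by
  obtain ⟨g, hgan, hgrep⟩ := vanish_rep hf hord
  refine ⟨g, hgan, hgrep, ?_⟩
  obtain ⟨K, t, ht, hlip⟩ := (hgan.contDiffAt (n := 1)).exists_lipschitzOnWith
  obtain ⟨ε, hε, hball⟩ := Metric.mem_nhds_iff.mp ht
  have hKn : (0:ℝ) ≤ (K:ℝ) := K.coe_nonneg
  refine ⟨ε, K, ‖g 0‖ + K * ε, hε, hKn, by positivity, ?_, ?_⟩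
  · intro a b ha hb
    have h := hlip.dist_le_mul a (hball (mem_ball_zero_iff.mpr ha))
      b (hball (mem_ball_zero_iff.mpr hb))
    simpa [dist_eq_norm] using h
  · intro a ha
    have h := hlip.dist_le_mul a (hball (mem_ball_zero_iff.mpr ha))
      0 (hball (mem_ball_zero_iff.mpr (by simpa using hε)))
    have h2 : ‖g a - g 0‖ ≤ (K:ℝ) * ‖a‖ := by simpa [dist_eq_norm] using h
    have h3 : ‖g a‖ ≤ ‖g a - g 0‖ + ‖g 0‖ := by
      calc ‖g a‖ = ‖(g a - g 0) + g 0‖ := by ring_nf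
        _ ≤ ‖g a - g 0‖ + ‖g 0‖ := norm_add_le _ _
    have h4 : (K:ℝ) * ‖a‖ ≤ (K:ℝ) * ε := mul_le_mul_of_nonneg_left ha.le hKn
    linarith

lemma lim_zero {E : Type*} [NormedAddCommGroup E] [NormedSpace ℂ E]
    {x y : ℕ → E} {lam : ℕ → ℂ} {v : E}
    (hx : Tendsto x atTop (𝓝 0)) (hy : Tendsto y atTop (𝓝 0))
    (hlim : Tendsto (fun ν => lam ν • (y ν - x ν)) atTop (𝓝 v))
    (hlamTop : ¬ Tendsto (fun ν => ‖lam ν‖) atTop atTop) : v = 0 := by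
  have hfreq : ∃ b : ℝ, ∃ᶠ ν in atTop, ‖lam ν‖ < b := by
    by_contra h
    push_neg at h
    apply hlamTop
    rw [tendsto_atTop]
    intro b
    filter_upwards [h b] with ν hν
    exact hν
  obtain ⟨b, hb⟩ := hfreq
  obtain ⟨φ, hφmono, hφ⟩ := Filter.extraction_of_frequently_atTop hb
  have h1 : Tendsto (fun ν => lam (φ ν) • (y (φ ν) - x (φ ν))) atTop (𝓝 v) :=
    hlim.comp hφmono.tendsto_atTop
  have h2 : Tendsto (fun ν => y (φ ν) - x (φ ν)) atTop (𝓝 0) := by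
    simpa using (hy.comp hφmono.tendsto_atTop).sub (hx.comp hφmono.tendsto_atTop)
  have h2n : Tendsto (fun ν => ‖y (φ ν) - x (φ ν)‖) atTop (𝓝 0) := by
    simpa using h2.norm
  have h3 : Tendsto (fun ν => lam (φ ν) • (y (φ ν) - x (φ ν))) atTop (𝓝 0) := by
    refine squeeze_zero_norm (a := fun ν => b * ‖y (φ ν) - x (φ ν)‖) (fun ν => ?_) ?_
    · rw [norm_smul]
      exact mul_le_mul_of_nonneg_right (hφ ν).le (norm_nonneg _)
    · simpa using h2n.const_mul b
  exact tendsto_nhds_unique h1 h3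

lemma ce1_mem {n : ℕ} {r : ℝ} (hr : 0 < r) {l : ℕ} (hl : 0 < l)
    (Φ Ψ : ℂ → (Fin (n + 1) → ℂ)) (hΦ0 : Φ 0 = 0)
    (hΨ1 : ∀ τ ∈ Metric.ball (0:ℂ) r, Ψ τ 0 = τ ^ l)
    (hrep : ∀ i : Fin (n + 1), i ≠ 0 →
      ∃ g : ℂ → ℂ, AnalyticAt ℂ g 0 ∧ ∀ z, Ψ z i = z ^ (l + 1) * g z)
    (c : ℂ) :
    c • ((Pi.single (0 : Fin (n + 1)) (1:ℂ)) : Fin (n+1) → ℂ) ∈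
      {v | ∃ x y : ℕ → (Fin (n+1) → ℂ), ∃ lam : ℕ → ℂ,
        (∀ ν, x ν ∈ Φ '' Metric.ball 0 r) ∧ (∀ ν, y ν ∈ Ψ '' Metric.ball 0 r) ∧
        Tendsto x atTop (𝓝 0) ∧ Tendsto y atTop (𝓝 0) ∧
        Tendsto (fun ν => lam ν • (y ν - x ν)) atTop (𝓝 v)} := by
  set e : ℕ → ℂ := fun ν => ((r / (2 * (ν + 1)) : ℝ) : ℂ) with he
  have hepos : ∀ ν : ℕ, (0:ℝ) < r / (2 * ((ν:ℝ) + 1)) := by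
    intro ν; positivity
  have hene : ∀ ν, e ν ≠ 0 := by
    intro ν
    simp only [he, ne_eq, Complex.ofReal_eq_zero]
    exact (hepos ν).ne'
  have henorm : ∀ ν, ‖e ν‖ = r / (2 * ((ν:ℝ) + 1)) := by
    intro ν
    simp only [he, Complex.norm_real, Real.norm_eq_abs, abs_of_pos (hepos ν)]
  have heball : ∀ ν, ‖e ν‖ < r := by
    intro ν
    rw [henorm]
    calc r / (2 * ((ν:ℝ) + 1)) ≤ r / 2 := by
          apply div_le_div_of_nonneg_left hr.le (by norm_num)
          nlinarith [Nat.cast_nonneg (α := ℝ) ν]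
      _ < r := by linarith
  have he0 : Tendsto e atTop (𝓝 0) := by
    have hre : Tendsto (fun ν : ℕ => r / (2 * ((ν:ℝ) + 1))) atTop (𝓝 0) := by
      have h1 : Tendsto (fun ν : ℕ => ((ν:ℝ) + 1)) atTop atTop :=
        tendsto_atTop_add_const_right atTop 1 tendsto_natCast_atTop_atTop
      have h2 : Tendsto (fun ν : ℕ => 2 * ((ν:ℝ) + 1)) atTop atTop :=
        h1.const_mul_atTop (by norm_num)
      exact Tendsto.div_atTop tendsto_const_nhds h2
    have hcomp := (Complex.continuous_ofReal.tendsto 0).comp hre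
    rw [Complex.ofReal_zero] at hcomp
    exact hcomp
  refine ⟨fun _ => 0, fun ν => Ψ (e ν), fun ν => c / (e ν) ^ l, ?_, ?_, ?_, ?_, ?_⟩
  · intro ν
    exact ⟨0, Metric.mem_ball_self hr, hΦ0⟩
  · intro ν
    exact ⟨e ν, mem_ball_zero_iff.mpr (heball ν), rfl⟩
  · exact tendsto_const_nhds
  · -- y → 0
    rw [tendsto_pi_nhds]
    intro i
    rcases eq_or_ne i 0 with rfl | hi
    · have : ∀ ν, Ψ (e ν) 0 = (e ν) ^ l := fun ν =>
        hΨ1 (e ν) (mem_ball_zero_iff.mpr (heball ν))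
      rw [show ((0: Fin (n+1) → ℂ)) 0 = 0 from rfl]
      apply Tendsto.congr (fun ν => (this ν).symm)
      simpa [zero_pow hl.ne'] using he0.pow l
    · obtain ⟨g, hgan, hgrep⟩ := hrep i hi
      rw [show ((0: Fin (n+1) → ℂ)) i = 0 from rfl]
      apply Tendsto.congr (fun ν => (hgrep (e ν)).symm)
      have : Tendsto (fun ν => (e ν) ^ (l+1) * g (e ν)) atTop (𝓝 (0 ^ (l+1) * g 0)) :=
        (he0.pow (l+1)).mul (hgan.continuousAt.tendsto.comp he0)
      simpa [zero_pow] using this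
  · -- main limit
    rw [tendsto_pi_nhds]
    intro i
    simp only [Pi.smul_apply, Pi.sub_apply, sub_zero, smul_eq_mul]
    rcases eq_or_ne i 0 with rfl | hi
    · have hval : ∀ ν, c / (e ν) ^ l * Ψ (e ν) 0 = c := by
        intro ν
        rw [hΨ1 (e ν) (mem_ball_zero_iff.mpr (heball ν))]
        exact div_mul_cancel₀ c (pow_ne_zero l (hene ν))
      have htarget : c * ((Pi.single (0 : Fin (n + 1)) (1:ℂ)) : Fin (n+1) → ℂ) 0 = c := by simp
      rw [htarget]
      exact Tendsto.congr (fun ν => (hval ν).symm) tendsto_const_nhds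
    · obtain ⟨g, hgan, hgrep⟩ := hrep i hi
      have hval : ∀ ν, c / (e ν) ^ l * Ψ (e ν) i = c * ((e ν) * g (e ν)) := by
        intro ν
        rw [hgrep (e ν), pow_succ]
        have h0 : (e ν) ^ l ≠ 0 := pow_ne_zero l (hene ν)
        field_simp
      have htarget : c * ((Pi.single (0 : Fin (n + 1)) (1:ℂ)) : Fin (n+1) → ℂ) i = 0 := by
        simp [Pi.single_eq_of_ne hi]
      rw [htarget]
      apply Tendsto.congr (fun ν => (hval ν).symm)
      have : Tendsto (fun ν => c * ((e ν) * g (e ν))) atTop (𝓝 (c * (0 * g 0))) :=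
        tendsto_const_nhds.mul (he0.mul (hgan.continuousAt.tendsto.comp he0))
      simpa using this


theorem stmt11    {n : ℕ} (r : ℝ) (hr : 0 < r) (k l : ℕ) (hk : 0 < k) (hl : 0 < l)
    (Φ Ψ : ℂ → (Fin (n + 1) → ℂ))
    (hΦ : DifferentiableOn ℂ Φ (Metric.ball 0 r))
    (hΨ : DifferentiableOn ℂ Ψ (Metric.ball 0 r))
    (hΦinj : Set.InjOn Φ (Metric.ball 0 r))
    (hΨinj : Set.InjOn Ψ (Metric.ball 0 r))
    (hΦ1 : ∀ t ∈ Metric.ball (0:ℂ) r, Φ t 0 = t ^ k)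
    (hΨ1 : ∀ τ ∈ Metric.ball (0:ℂ) r, Ψ τ 0 = τ ^ l)
    (hΦord : ∀ i : Fin (n + 1), i ≠ 0 → ∀ m ≤ k, iteratedDeriv m (fun t => Φ t i) 0 = 0)
    (hΨord : ∀ i : Fin (n + 1), i ≠ 0 → ∀ m ≤ l, iteratedDeriv m (fun τ => Ψ τ i) 0 = 0)
 :
    {u : Fin (n + 1) → ℂ | ∃ v ∈ relTangentCone (Φ '' Metric.ball 0 r) (Ψ '' Metric.ball 0 r),
        ∃ c : ℂ, u = v + c • ((Pi.single (0 : Fin (n + 1)) (1 : ℂ)) : Fin (n + 1) → ℂ)}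
      = relTangentCone (Φ '' Metric.ball 0 r) (Ψ '' Metric.ball 0 r) := by
  classical
  have hball0 : (0:ℂ) ∈ Metric.ball (0:ℂ) r := Metric.mem_ball_self hr
  have hΦ0 : Φ 0 = 0 := by
    funext i
    rcases eq_or_ne i 0 with rfl | hi
    · rw [hΦ1 0 hball0, zero_pow hk.ne']; rfl
    · have h := hΦord i hi 0 (Nat.zero_le _)
      rw [iteratedDeriv_zero] at h
      exact h
  have hpack : ∀ i : Fin (n + 1), i ≠ 0 → ∃ g : ℂ → ℂ, AnalyticAt ℂ g 0 ∧
      (∀ z, Ψ z i = z ^ (l + 1) * g z) ∧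
      ∃ ε K M : ℝ, 0 < ε ∧ 0 ≤ K ∧ 0 ≤ M ∧
        (∀ a b : ℂ, ‖a‖ < ε → ‖b‖ < ε → ‖g a - g b‖ ≤ K * ‖a - b‖) ∧
        (∀ a : ℂ, ‖a‖ < ε → ‖g a‖ ≤ M) := by
    intro i hi
    have hdiff : DifferentiableOn ℂ (fun τ => Ψ τ i) (Metric.ball 0 r) := by
      intro z hz
      exact ((ContinuousLinearMap.proj i :
        (Fin (n + 1) → ℂ) →L[ℂ] ℂ).differentiable.differentiableAt).comp_differentiableWithinAt
          z (hΨ z hz)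
    exact comp_pack (hdiff.analyticAt (Metric.ball_mem_nhds 0 hr)) (hΨord i hi)
  have hrep' : ∀ i : Fin (n + 1), i ≠ 0 →
      ∃ g : ℂ → ℂ, AnalyticAt ℂ g 0 ∧ ∀ z, Ψ z i = z ^ (l + 1) * g z := by
    intro i hi
    obtain ⟨g, h1, h2, _⟩ := hpack i hi
    exact ⟨g, h1, h2⟩
  ext u
  simp only [Set.mem_setOf_eq]
  constructor
  · rintro ⟨v, hv, c, rfl⟩
    by_cases hc : c = 0
    · simpa [hc] using hv
    obtain ⟨x, y, lam, hxX, hyY, hx0, hy0, hlim⟩ := hv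
    by_cases hT : Tendsto (fun ν => ‖lam ν‖) atTop atTop
    · -- main case : |lam| → ∞
      choose tτ hτball hτeq using hyY
      set d : ℕ → ℂ := fun ν => c / lam ν with hd
      have hd0 : Tendsto d atTop (𝓝 0) := by
        rw [tendsto_zero_iff_norm_tendsto_zero]
        have hdn : ∀ ν, ‖d ν‖ = ‖c‖ / ‖lam ν‖ := fun ν => norm_div _ _
        exact Tendsto.congr (fun ν => (hdn ν).symm)
          (Tendsto.div_atTop tendsto_const_nhds hT)
      have hτpow : ∀ ν, (tτ ν) ^ l = y ν 0 := by
        intro ν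
        rw [← hΨ1 (tτ ν) (hτball ν), hτeq ν]
      have hτ0 : Tendsto tτ atTop (𝓝 0) := by
        apply tendsto_of_pow_tendsto hl
        apply Tendsto.congr (fun ν => (hτpow ν).symm)
        have := tendsto_pi_nhds.mp hy0 0
        simpa using this
      set σ : ℕ → ℂ := fun ν =>
        if h : tτ ν ≠ 0 ∧ ‖d ν‖ * 2 ≤ ‖tτ ν‖ ^ l then
          tτ ν * (1 + d ν / (tτ ν) ^ l) ^ ((l:ℂ)⁻¹)
        else ((tτ ν) ^ l + d ν) ^ ((l:ℂ)⁻¹) with hσdef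
      have hσpow : ∀ ν, (σ ν) ^ l = (tτ ν) ^ l + d ν := by
        intro ν
        simp only [hσdef]
        split_ifs with h
        · obtain ⟨h0, _⟩ := h
          rw [mul_pow, Complex.cpow_nat_inv_pow _ hl.ne']
          have hτl0 : (tτ ν) ^ l ≠ 0 := pow_ne_zero _ h0
          field_simp
        · exact Complex.cpow_nat_inv_pow _ hl.ne'
      have hσ0 : Tendsto σ atTop (𝓝 0) := by
        apply tendsto_of_pow_tendsto hl
        apply Tendsto.congr (fun ν => (hσpow ν).symm)
        have h1 : Tendsto (fun ν => (tτ ν) ^ l) atTop (𝓝 0) := by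
          simpa [zero_pow hl.ne'] using hτ0.pow l
        simpa using h1.add hd0
      set σ' : ℕ → ℂ := fun ν => if ‖σ ν‖ < r then σ ν else 0 with hσ'def
      have hσ'ball : ∀ ν, σ' ν ∈ Metric.ball (0:ℂ) r := by
        intro ν
        simp only [hσ'def]
        split_ifs with h
        · exact mem_ball_zero_iff.mpr h
        · exact Metric.mem_ball_self hr
      have hσ'eq : ∀ᶠ ν in atTop, σ' ν = σ ν := by
        filter_upwards [NormedAddCommGroup.tendsto_nhds_zero.mp hσ0 r hr] with ν hν
        simp only [hσ'def]
        exact if_pos hν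
      have hσ'0 : Tendsto σ' atTop (𝓝 0) := hσ0.congr' (hσ'eq.mono fun ν h => h.symm)
      have hlamne : ∀ᶠ ν in atTop, lam ν ≠ 0 := by
        filter_upwards [hT.eventually_ge_atTop 1] with ν hν
        intro h
        rw [h, norm_zero] at hν
        linarith
      refine ⟨x, fun ν => Ψ (σ' ν), lam, hxX, fun ν => ⟨σ' ν, hσ'ball ν, rfl⟩, hx0, ?_, ?_⟩
      · -- Ψ ∘ σ' → 0
        rw [tendsto_pi_nhds]
        intro i
        rcases eq_or_ne i 0 with rfl | hi
        · apply Tendsto.congr (fun ν => (hΨ1 (σ' ν) (hσ'ball ν)).symm)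
          simpa [zero_pow hl.ne'] using hσ'0.pow l
        · obtain ⟨g, hgan, hgrep⟩ := hrep' i hi
          apply Tendsto.congr (fun ν => (hgrep (σ' ν)).symm)
          have hgl : Tendsto (fun ν => σ' ν ^ (l+1) * g (σ' ν)) atTop (𝓝 (0 ^ (l+1) * g 0)) :=
            (hσ'0.pow (l+1)).mul (hgan.continuousAt.tendsto.comp hσ'0)
          simpa [zero_pow] using hgl
      · -- the limit
        have hsplit : ∀ ν, lam ν • (Ψ (σ' ν) - x ν) =
            lam ν • (Ψ (σ' ν) - Ψ (tτ ν)) + lam ν • (y ν - x ν) := by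
          intro ν
          rw [← smul_add]
          congr 1
          rw [hτeq ν]
          abel
        rw [show v + c • ((Pi.single (0 : Fin (n + 1)) (1 : ℂ)) : Fin (n + 1) → ℂ) =
            c • ((Pi.single (0 : Fin (n + 1)) (1 : ℂ)) : Fin (n + 1) → ℂ) + v from
            add_comm _ _]
        apply Tendsto.congr (fun ν => (hsplit ν).symm)
        apply Tendsto.add _ hlim
        rw [tendsto_pi_nhds]
        intro i
        simp only [Pi.smul_apply, Pi.sub_apply, smul_eq_mul]
        rcases eq_or_ne i 0 with rfl | hi
        · have htarget : c * ((Pi.single (0 : Fin (n + 1)) (1 : ℂ)) : Fin (n + 1) → ℂ) 0 = c := by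
            simp
          rw [htarget]
          apply Tendsto.congr' _ tendsto_const_nhds
          filter_upwards [hσ'eq, hlamne,
            NormedAddCommGroup.tendsto_nhds_zero.mp hσ0 r hr] with ν h1 h2 h3
          rw [h1, hΨ1 (σ ν) (mem_ball_zero_iff.mpr h3), hΨ1 (tτ ν) (hτball ν), hσpow ν,
            add_sub_cancel_left]
          show c = lam ν * (c / lam ν)
          rw [mul_comm, div_mul_cancel₀ _ h2]
        · obtain ⟨g, hgan, hgrep, ε, K, M, hε, hK, hM, hgK, hgM⟩ := hpack i hi
          have htarget : c * ((Pi.single (0 : Fin (n + 1)) (1 : ℂ)) : Fin (n + 1) → ℂ) i = 0 := by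
            simp [Pi.single_eq_of_ne hi]
          rw [htarget]
          apply squeeze_zero_norm'
            (a := fun ν => (‖c‖ * (4 * (((l:ℝ)+1) * (5/2)^l * M + K) + 3 * M) + 1) *
              (‖σ ν‖ + ‖tτ ν‖))
          · filter_upwards [hσ'eq, hlamne,
              NormedAddCommGroup.tendsto_nhds_zero.mp hσ0 ε hε,
              NormedAddCommGroup.tendsto_nhds_zero.mp hτ0 (min ε 1) (lt_min hε one_pos)]
              with ν h1 h2 h3 h4
            rw [h1]
            have hσε : ‖σ ν‖ < ε := h3
            have hτε : ‖tτ ν‖ < ε := lt_of_lt_of_le h4 (min_le_left _ _)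
            have hτ1 : ‖tτ ν‖ ≤ 1 := (lt_of_lt_of_le h4 (min_le_right _ _)).le
            have hlamd : ‖lam ν‖ * ‖d ν‖ ≤ ‖c‖ := by
              have : ‖d ν‖ = ‖c‖ / ‖lam ν‖ := norm_div _ _
              rw [this, mul_comm, div_mul_cancel₀ _ (norm_ne_zero_iff.mpr h2)]
            have hbr : (tτ ν ≠ 0 ∧ ‖d ν‖ * 2 ≤ ‖tτ ν‖ ^ l ∧
                σ ν = tτ ν * (1 + d ν / (tτ ν) ^ l) ^ ((l:ℂ)⁻¹)) ∨
                ‖tτ ν‖ ^ l ≤ 2 * ‖d ν‖ := by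
              by_cases h : tτ ν ≠ 0 ∧ ‖d ν‖ * 2 ≤ ‖tτ ν‖ ^ l
              · left
                refine ⟨h.1, h.2, ?_⟩
                simp only [hσdef]
                rw [dif_pos h]
              · rw [not_and_or] at h
                rcases h with h | h
                · right
                  push_neg at h
                  rw [h, norm_zero, zero_pow hl.ne']
                  positivity
                · right
                  push_neg at h
                  linarith
            exact key_est hl hK hM hgrep hgK hgM hlamd (hσpow ν) hbr hτε hσε hτ1
          · have hz : Tendsto (fun ν => ‖σ ν‖ + ‖tτ ν‖) atTop (𝓝 0) := by
              simpa using hσ0.norm.add hτ0.norm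
            simpa using hz.const_mul
              (‖c‖ * (4 * (((l:ℝ)+1) * (5/2)^l * M + K) + 3 * M) + 1)
    · -- |lam| not → ∞ : v = 0
      have hv0 : v = 0 := lim_zero hx0 hy0 hlim hT
      rw [hv0, zero_add]
      exact ce1_mem hr hl Φ Ψ hΦ0 hΨ1 hrep' c
  · intro hu
    exact ⟨u, hu, 0, by simp⟩
end

section
/- Containment half of the main formula: with Φ, Ψ, X, Y, εᵢ, nᵢ, vᵢ as above (parametrized curves with Φ(t) = (t^k, φ₂(t), …, φₙ(t)), Ψ(τ) = (τ^l, ψ₂(τ), …, ψₙ(τ)), ord φᵢ > k, ord ψᵢ > l, l ≤ k), each two-dimensional subspace Lin(vᵢ, e₁) is contained in C₀(X,Y). -/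
open Filter Topology


private lemma iteratedDeriv_eq_factorial_smul {E : Type*} [NormedAddCommGroup E]
    [NormedSpace ℂ E] [CompleteSpace E] {f : ℂ → E} {p : FormalMultilinearSeries ℂ ℂ E}
    (hp : HasFPowerSeriesAt f p 0) (m : ℕ) :
    iteratedDeriv m f 0 = (Nat.factorial m) • p.coeff m := by
  obtain ⟨R, hR⟩ := hp
  rw [iteratedDeriv_eq_iteratedFDeriv, ← hR.factorial_smul 1 m]
  rfl

private lemma coeff_eq_zero_of_iteratedDeriv_eq_zero {E : Type*} [NormedAddCommGroup E]
    [NormedSpace ℂ E] [CompleteSpace E] {f : ℂ → E} {p : FormalMultilinearSeries ℂ ℂ E}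
    (hp : HasFPowerSeriesAt f p 0) (m : ℕ) (h : iteratedDeriv m f 0 = 0) : p m = 0 := by
  rw [← FormalMultilinearSeries.coeff_eq_zero]
  have h2 := (iteratedDeriv_eq_factorial_smul hp m).symm.trans h
  rw [← Nat.cast_smul_eq_nsmul ℂ] at h2
  rcases smul_eq_zero.mp h2 with h' | h'
  · exact absurd h' (Nat.cast_ne_zero.mpr (Nat.factorial_ne_zero m))
  · exact h'

private lemma exists_factor_of_iteratedDeriv_eq_zero {f : ℂ → ℂ}
    (hf : AnalyticAt ℂ f 0) {d : ℕ} (h : ∀ m < d, iteratedDeriv m f 0 = 0) :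
    ∃ g : ℂ → ℂ, AnalyticAt ℂ g 0 ∧ ∀ᶠ z in 𝓝 0, f z = z ^ d * g z := by
  obtain ⟨p, hp⟩ := hf
  by_cases hp0 : p = 0
  · subst hp0
    refine ⟨0, analyticAt_const, ?_⟩
    filter_upwards [hp.eventually_eq_zero] with z hz
    simp [hz]
  · have hcoeff : ∀ m < d, p m = 0 := fun m hm =>
      coeff_eq_zero_of_iteratedDeriv_eq_zero hp m (h m hm)
    have hd : d ≤ p.order := by
      by_contra hlt
      exact p.apply_order_ne_zero hp0 (hcoeff _ (not_le.mp hlt))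
    refine ⟨fun z => z ^ (p.order - d) * (Function.swap dslope 0)^[p.order] f z,
      (analyticAt_id.pow _).mul
        ⟨_, hp.has_fpower_series_iterate_dslope_fslope p.order⟩, ?_⟩
    filter_upwards [Eventually.of_forall hp.eq_pow_order_mul_iterate_dslope] with z hz
    rw [hz]
    simp only [sub_zero, smul_eq_mul]
    rw [← mul_assoc, ← pow_add, Nat.add_sub_cancel' hd]

private lemma analyticAt_deriv {E : Type*} [NormedAddCommGroup E]
    [NormedSpace ℂ E] [CompleteSpace E] {g : ℂ → E} (hg : AnalyticAt ℂ g 0) :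
    AnalyticAt ℂ (deriv g) 0 := by
  have h := ((ContinuousLinearMap.apply ℂ E (1:ℂ)).analyticAt
      (fderiv ℂ g 0)).comp hg.fderiv
  exact h

private lemma iteratedDeriv_eq_zero_of_factor {E : Type*} [NormedAddCommGroup E]
    [NormedSpace ℂ E] [CompleteSpace E] :
    ∀ (d : ℕ) (f g : ℂ → E), AnalyticAt ℂ g 0 → (∀ᶠ z in 𝓝 0, f z = z ^ d • g z) →
    ∀ m < d, iteratedDeriv m f 0 = 0 := by
  intro d
  induction d with
  | zero => intro f g _ _ m hm; omega
  | succ d ih =>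
    intro f g hg hfg m hm
    cases m with
    | zero =>
      simpa [iteratedDeriv_zero] using hfg.self_of_nhds.trans (by simp)
    | succ s =>
      rw [iteratedDeriv_succ']
      refine ih (deriv f) (fun z => ((d : ℂ) + 1) • g z + z • deriv g z)
        ((analyticAt_const.smul hg).add (analyticAt_id.smul (analyticAt_deriv hg))) ?_ s (by omega)
      have hgd : ∀ᶠ z in 𝓝 (0:ℂ), AnalyticAt ℂ g z := hg.eventually_analyticAt
      have hd' : deriv f =ᶠ[𝓝 (0:ℂ)] deriv (fun z => z ^ (d+1) • g z) :=
        Filter.EventuallyEq.deriv hfg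
      filter_upwards [hd', hgd] with z hz hgz
      rw [hz]
      have h1 : HasDerivAt (fun w : ℂ => w ^ (d + 1) • g w)
          (z ^ (d + 1) • deriv g z + ((d + 1 : ℕ) * z ^ (d + 1 - 1) : ℂ) • g z) z :=
        (hasDerivAt_pow (d+1) z).smul hgz.differentiableAt.hasDerivAt
      rw [h1.deriv]
      rw [smul_add, smul_smul, smul_smul, add_comm]
      congr 2 <;> push_cast <;> ring

private lemma tendsto_inv_mul_of_hasDerivAt {h : ℂ → ℂ} {d : ℂ}
    (hh : HasDerivAt h d 0) (h0 : h 0 = 0) :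
    Tendsto (fun u : ℂ => u⁻¹ * h u) (𝓝[≠] 0) (𝓝 d) := by
  have := hasDerivAt_iff_tendsto_slope.mp hh
  refine this.congr (fun u => ?_)
  simp [slope_def_field, h0, div_eq_inv_mul]

private lemma tendsto_pow_punctured {P : ℕ} (hP : 0 < P) :
    Tendsto (fun s : ℂ => s ^ P) (𝓝[≠] 0) (𝓝[≠] 0) := by
  rw [tendsto_nhdsWithin_iff]
  constructor
  · have := ((continuous_pow P).tendsto (0:ℂ)).mono_left (nhdsWithin_le_nhds (s := {(0:ℂ)}ᶜ))
    simpa [zero_pow hP.ne'] using this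
  · exact eventually_mem_nhdsWithin.mono (fun s hs => pow_ne_zero _ hs)

private lemma exists_seq_pos (ρ : ℝ) (hρ : 0 < ρ) :
    ∃ t : ℕ → ℂ, (∀ ν, t ν ≠ 0) ∧ (∀ ν, ‖t ν‖ ≤ ρ) ∧ Tendsto t atTop (𝓝[≠] (0:ℂ)) := by
  have hpos : ∀ ν : ℕ, (0:ℝ) < ρ / (ν + 1) := fun ν => by positivity
  refine ⟨fun ν => ((ρ / (ν + 1) : ℝ) : ℂ), fun ν => ?_, fun ν => ?_, ?_⟩
  · simpa using (Complex.ofReal_ne_zero).mpr (hpos ν).ne'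
  · rw [Complex.norm_real, Real.norm_eq_abs, abs_of_pos (by positivity)]
    rw [div_le_iff₀ (by positivity)]
    nlinarith [Nat.cast_nonneg (α := ℝ) ν]
  · rw [tendsto_nhdsWithin_iff]
    constructor
    · have h1 : Tendsto (fun ν : ℕ => ρ / (ν + 1 : ℝ)) atTop (𝓝 0) :=
        Tendsto.div_atTop tendsto_const_nhds
          (tendsto_atTop_add_const_right _ 1 tendsto_natCast_atTop_atTop)
      have h2 := (Complex.continuous_ofReal.tendsto 0).comp h1
      simpa only [Function.comp_def, Complex.ofReal_zero] using h2
    · refine Eventually.of_forall (fun ν => ?_)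
      simpa using (Complex.ofReal_ne_zero).mpr (hpos ν).ne'


theorem stmt13    {n : ℕ} (r : ℝ) (hr : 0 < r) (k l : ℕ) (hk : 0 < k) (hl : 0 < l)
    (Φ Ψ : ℂ → (Fin (n + 1) → ℂ))
    (hΦ : DifferentiableOn ℂ Φ (Metric.ball 0 r))
    (hΨ : DifferentiableOn ℂ Ψ (Metric.ball 0 r))
    (hΦinj : Set.InjOn Φ (Metric.ball 0 r))
    (hΨinj : Set.InjOn Ψ (Metric.ball 0 r))
    (hΦ1 : ∀ t ∈ Metric.ball (0:ℂ) r, Φ t 0 = t ^ k)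
    (hΨ1 : ∀ τ ∈ Metric.ball (0:ℂ) r, Ψ τ 0 = τ ^ l)
    (hΦord : ∀ i : Fin (n + 1), i ≠ 0 → ∀ m ≤ k, iteratedDeriv m (fun t => Φ t i) 0 = 0)
    (hΨord : ∀ i : Fin (n + 1), i ≠ 0 → ∀ m ≤ l, iteratedDeriv m (fun τ => Ψ τ i) 0 = 0)
    (hlk : l ≤ k)
    (ε : ℂ) (hε : ε ^ l = 1) (vε : Fin (n + 1) → ℂ)
    (hvε : Tendsto (fun t : ℂ => (t ^ holOrder (fun s : ℂ => Φ (s ^ l) - Ψ (ε * s ^ k)))⁻¹ •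
        (Φ (t ^ l) - Ψ (ε * t ^ k))) (𝓝[≠] 0) (𝓝 vε)) :
    (Submodule.span ℂ {vε, (Pi.single (0 : Fin (n + 1)) (1 : ℂ))} : Set (Fin (n + 1) → ℂ))
      ⊆ relTangentCone (Φ '' Metric.ball 0 r) (Ψ '' Metric.ball 0 r) := by
  classical
  set N := holOrder (fun s : ℂ => Φ (s ^ l) - Ψ (ε * s ^ k)) with hNdef
  have hball : Metric.ball (0:ℂ) r ∈ 𝓝 0 := Metric.ball_mem_nhds 0 hr
  have hΦa : AnalyticAt ℂ Φ 0 := hΦ.analyticAt hball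
  have hΨa : AnalyticAt ℂ Ψ 0 := hΨ.analyticAt hball
  have hΦai : ∀ i, AnalyticAt ℂ (fun t => Φ t i) 0 := analyticAt_pi_iff.mp hΦa
  have hΨai : ∀ i, AnalyticAt ℂ (fun t => Ψ t i) 0 := analyticAt_pi_iff.mp hΨa
  have hΦ0 : Φ 0 = 0 := by
    funext i
    by_cases hi : i = 0
    · subst hi; rw [Pi.zero_apply, hΦ1 0 (Metric.mem_ball_self hr), zero_pow hk.ne']
    · have := hΦord i hi 0 (Nat.zero_le k)
      rwa [iteratedDeriv_zero] at this
  have hΨ0 : Ψ 0 = 0 := by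
    funext i
    by_cases hi : i = 0
    · subst hi; rw [Pi.zero_apply, hΨ1 0 (Metric.mem_ball_self hr), zero_pow hl.ne']
    · have := hΨord i hi 0 (Nat.zero_le l)
      rwa [iteratedDeriv_zero] at this
  have hΨfac : ∀ i : Fin (n+1), ∃ g : ℂ → ℂ, AnalyticAt ℂ g 0 ∧
      (i ≠ 0 → ∀ᶠ z in 𝓝 0, Ψ z i = z ^ (l+1) * g z) := by
    intro i
    by_cases hi : i = 0
    · exact ⟨0, analyticAt_const, fun h => absurd hi h⟩
    · obtain ⟨g, hg1, hg2⟩ := exists_factor_of_iteratedDeriv_eq_zero (hΨai i)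
        (d := l + 1) (fun m hm => hΨord i hi m (by omega))
      exact ⟨g, hg1, fun _ => hg2⟩
  choose gΨ hgΨa hgΨe using hΨfac
  have hΦfac : ∀ i : Fin (n+1), ∃ g : ℂ → ℂ, AnalyticAt ℂ g 0 ∧
      (i ≠ 0 → ∀ᶠ z in 𝓝 0, Φ z i = z ^ (k+1) * g z) := by
    intro i
    by_cases hi : i = 0
    · exact ⟨0, analyticAt_const, fun h => absurd hi h⟩
    · obtain ⟨g, hg1, hg2⟩ := exists_factor_of_iteratedDeriv_eq_zero (hΦai i)
        (d := k + 1) (fun m hm => hΦord i hi m (by omega))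
      exact ⟨g, hg1, fun _ => hg2⟩
  choose gΦ hgΦa hgΦe using hΦfac
  intro w hw
  rw [SetLike.mem_coe, Submodule.mem_span_pair] at hw
  obtain ⟨a, b, rfl⟩ := hw
  by_cases hav : a = 0 ∨ vε = 0
  · -- case 1 : the vector is b • e₁
    have hw0 : a • vε + b • (Pi.single (0 : Fin (n+1)) (1:ℂ) : Fin (n+1) → ℂ)
        = b • (Pi.single (0 : Fin (n+1)) (1:ℂ) : Fin (n+1) → ℂ) := by
      rcases hav with h | h <;> simp [h]
    rw [hw0]
    obtain ⟨t, htne, htnorm, htt⟩ := exists_seq_pos (r/2) (by positivity)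
    have hrr : r / 2 < r := by linarith
    have hballe : ∀ᶠ s in 𝓝 (0:ℂ), s ∈ Metric.ball (0:ℂ) r := hball
    have L1 : Tendsto (fun s : ℂ => (b * (s^l)⁻¹) • Ψ s) (𝓝[≠] (0:ℂ))
        (𝓝 (b • (Pi.single (0 : Fin (n+1)) (1:ℂ) : Fin (n+1) → ℂ))) := by
      rw [tendsto_pi_nhds]
      intro i
      by_cases hi : i = 0
      · subst hi
        have htarget : (b • (Pi.single (0 : Fin (n+1)) (1:ℂ) : Fin (n+1) → ℂ)) 0 = b := by
          simp
        rw [htarget]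
        have hev : ∀ᶠ s in 𝓝[≠] (0:ℂ), b = ((b * (s^l)⁻¹) • Ψ s) 0 := by
          filter_upwards [self_mem_nhdsWithin,
            hballe.filter_mono nhdsWithin_le_nhds] with s hs hsball
          have hs0 : s ≠ 0 := hs
          rw [Pi.smul_apply, hΨ1 s hsball, smul_eq_mul]
          field_simp
        exact tendsto_const_nhds.congr' hev
      · have htarget : (b • (Pi.single (0 : Fin (n+1)) (1:ℂ) : Fin (n+1) → ℂ)) i = 0 := by
          simp [Pi.single_eq_of_ne hi]
        rw [htarget]
        have hev : ∀ᶠ s in 𝓝[≠] (0:ℂ), b * (s * gΨ i s) = ((b * (s^l)⁻¹) • Ψ s) i := by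
          filter_upwards [self_mem_nhdsWithin,
            (hgΨe i hi).filter_mono nhdsWithin_le_nhds] with s hs hfac
          have hs0 : s ≠ 0 := hs
          rw [Pi.smul_apply, smul_eq_mul, hfac, pow_succ]
          field_simp
        have h1 : Tendsto (fun s : ℂ => s * gΨ i s) (𝓝 (0:ℂ)) (𝓝 (0 * gΨ i 0)) :=
          continuousAt_id.mul (hgΨa i).continuousAt
        have h2 := ((h1.const_mul b).mono_left nhdsWithin_le_nhds).congr' hev
        simpa using h2
    refine ⟨fun _ => Φ 0, fun ν => Ψ (t ν), fun ν => b * ((t ν) ^ l)⁻¹,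
      fun ν => ⟨0, Metric.mem_ball_self hr, rfl⟩,
      fun ν => ⟨t ν, by
        rw [Metric.mem_ball, dist_zero_right]
        exact lt_of_le_of_lt (htnorm ν) hrr, rfl⟩,
      by simpa [hΦ0] using (tendsto_const_nhds : Tendsto (fun _ : ℕ => Φ 0) atTop (𝓝 (Φ 0))),
      ?_, ?_⟩
    · have hc : ContinuousAt Ψ 0 := hΨa.continuousAt
      have h3 := hc.tendsto.comp (htt.mono_right nhdsWithin_le_nhds)
      simpa [hΨ0, Function.comp_def] using h3
    · have h4 := L1.comp htt
      simpa [hΦ0, Function.comp_def] using h4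
  · push_neg at hav
    obtain ⟨ha, hv⟩ := hav
    have hballe : ∀ᶠ s in 𝓝 (0:ℂ), s ∈ Metric.ball (0:ℂ) r := hball
    have hl0 : (l:ℂ) ≠ 0 := Nat.cast_ne_zero.mpr hl.ne'
    have hε0 : ε ≠ 0 := by
      intro h; rw [h, zero_pow hl.ne'] at hε; exact zero_ne_one hε
    have hεnorm : ‖ε‖ = 1 := by
      have h1 : ‖ε‖ ^ l = 1 := by rw [← norm_pow, hε, norm_one]
      rcases lt_trichotomy ‖ε‖ 1 with h | h | h
      · have h2 := pow_lt_one₀ (norm_nonneg ε) h hl.ne'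
        rw [h1] at h2; exact absurd h2 (lt_irrefl 1)
      · exact h
      · have h2 := one_lt_pow₀ h hl.ne'
        rw [h1] at h2; exact absurd h2 (lt_irrefl 1)
    have hcontl : Tendsto (fun s : ℂ => s ^ l) (𝓝 0) (𝓝 0) := by
      have := (continuous_pow l (M := ℂ)).tendsto 0
      rwa [zero_pow hl.ne'] at this
    have hcontk : Tendsto (fun s : ℂ => ε * s ^ k) (𝓝 0) (𝓝 0) := by
      have h1 := (continuous_pow k (M := ℂ)).tendsto 0
      rw [zero_pow hk.ne'] at h1
      simpa using h1.const_mul ε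
    have hFa : AnalyticAt ℂ (fun s : ℂ => Φ (s ^ l) - Ψ (ε * s ^ k)) 0 := by
      have h1 : AnalyticAt ℂ Φ ((0:ℂ) ^ l) := by rwa [zero_pow hl.ne']
      have h2 : AnalyticAt ℂ Ψ (ε * (0:ℂ) ^ k) := by
        rw [zero_pow hk.ne', mul_zero]; exact hΨa
      have h3 : AnalyticAt ℂ (fun s : ℂ => s ^ l) 0 := analyticAt_id.pow l
      have h4 : AnalyticAt ℂ (fun s : ℂ => ε * s ^ k) 0 :=
        analyticAt_const.mul (analyticAt_id.pow k)
      have h5 := (AnalyticAt.comp (x := (0:ℂ)) h1 h3).sub (AnalyticAt.comp (x := (0:ℂ)) h2 h4)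
      exact h5
    have hGv : ∃ G : ℂ → (Fin (n+1) → ℂ), AnalyticAt ℂ G 0 ∧
        ∀ᶠ s in 𝓝 (0:ℂ), Φ (s ^ l) - Ψ (ε * s ^ k) = s ^ (k*l+l) • G s := by
      refine ⟨fun s i => if i = 0 then 0
        else gΦ i (s^l) - ε^(l+1) * s^(k-l) * gΨ i (ε * s^k), ?_, ?_⟩
      · apply analyticAt_pi_iff.mpr
        intro i
        by_cases hi : i = 0
        · simp only [hi, if_true]
          exact analyticAt_const
        · simp only [if_neg hi]
          have h1 : AnalyticAt ℂ (gΦ i) ((0:ℂ) ^ l) := by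
            rw [zero_pow hl.ne']; exact hgΦa i
          have h2 : AnalyticAt ℂ (gΨ i) (ε * (0:ℂ) ^ k) := by
            rw [zero_pow hk.ne', mul_zero]; exact hgΨa i
          have h5 := (AnalyticAt.comp (x := (0:ℂ)) h1 (analyticAt_id.pow l)).sub
            (((analyticAt_const (v := ε^(l+1))).mul (analyticAt_id.pow (k-l))).mul
              (AnalyticAt.comp (x := (0:ℂ)) h2 ((analyticAt_const (v := ε)).mul (analyticAt_id.pow k))))
          exact h5
      · have ev1 : ∀ᶠ s in 𝓝 (0:ℂ), ∀ i : Fin (n+1), i ≠ 0 →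
            Φ (s^l) i = (s^l)^(k+1) * gΦ i (s^l) := by
          rw [eventually_all]
          intro i
          by_cases hi : i = 0
          · exact Eventually.of_forall (fun s h => absurd hi h)
          · exact (hcontl.eventually (hgΦe i hi)).mono (fun s h _ => h)
        have ev2 : ∀ᶠ s in 𝓝 (0:ℂ), ∀ i : Fin (n+1), i ≠ 0 →
            Ψ (ε * s^k) i = (ε * s^k)^(l+1) * gΨ i (ε * s^k) := by
          rw [eventually_all]
          intro i
          by_cases hi : i = 0
          · exact Eventually.of_forall (fun s h => absurd hi h)
          · exact (hcontk.eventually (hgΨe i hi)).mono (fun s h _ => h)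
        filter_upwards [ev1, ev2, hcontl.eventually hballe, hcontk.eventually hballe]
          with s h1 h2 h3 h4
        funext i
        by_cases hi : i = 0
        · subst hi
          rw [Pi.sub_apply, hΦ1 _ h3, hΨ1 _ h4, Pi.smul_apply]
          simp only [if_true, smul_eq_mul, mul_zero]
          rw [mul_pow, hε, one_mul, ← pow_mul, ← pow_mul, mul_comm l k, sub_self]
        · rw [Pi.sub_apply, h1 i hi, h2 i hi, Pi.smul_apply]
          simp only [if_neg hi, smul_eq_mul]
          rw [← pow_mul, show l*(k+1) = k*l+l from by ring,
            mul_pow (ε) (s^k) (l+1), ← pow_mul, show k*(l+1) = k*l+k from by ring,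
            show k*l+k = (k*l+l)+(k-l) from by omega, pow_add]
          ring
    have hkey : ∀ m < k*l+l, iteratedDeriv m (fun s : ℂ => Φ (s ^ l) - Ψ (ε * s ^ k)) 0 = 0 := by
      obtain ⟨G, hGa, hGe⟩ := hGv
      exact iteratedDeriv_eq_zero_of_factor (k*l+l) _ G hGa hGe
    have hSne : {m : ℕ |
        iteratedDeriv m (fun s : ℂ => Φ (s ^ l) - Ψ (ε * s ^ k)) 0 ≠ 0}.Nonempty := by
      by_contra hS
      rw [Set.not_nonempty_iff_eq_empty, Set.eq_empty_iff_forall_notMem] at hS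
      have hall : ∀ m, iteratedDeriv m (fun s : ℂ => Φ (s^l) - Ψ (ε*s^k)) 0 = 0 := by
        intro m
        by_contra hm
        exact hS m hm
      obtain ⟨p, hp⟩ := hFa
      have hp0 : p = 0 :=
        FormalMultilinearSeries.ext
          (fun m => coeff_eq_zero_of_iteratedDeriv_eq_zero hp m (hall m))
      subst hp0
      have hev0 := hp.eventually_eq_zero
      have h5 : (fun t : ℂ => (t ^ N)⁻¹ • (Φ (t ^ l) - Ψ (ε * t ^ k)))
          =ᶠ[𝓝[≠] (0:ℂ)] (fun _ => (0 : Fin (n+1) → ℂ)) := by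
        filter_upwards [hev0.filter_mono (nhdsWithin_le_nhds (s := {(0:ℂ)}ᶜ))] with s hs
        rw [hs, smul_zero]
      exact hv (tendsto_nhds_unique hvε (tendsto_const_nhds.congr' h5.symm))
    have hN : k*l + l ≤ N := by
      by_contra hlt
      have hmem : iteratedDeriv N (fun s : ℂ => Φ (s ^ l) - Ψ (ε * s ^ k)) 0 ≠ 0 :=
        Nat.sInf_mem hSne
      exact hmem (hkey N (not_le.mp hlt))
    -- setup of the perturbation
    set P := N - k*l with hPdef
    have hP0 : 0 < P := by omega
    have hNsplit : N = k*l + P := by omega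
    set c : ℂ := -(b * ε) / (a * l) with hcdef
    set τ : ℂ → ℂ := fun s => (ε + c * s^P) * s^k with hτdef
    have hτcont : Continuous τ := by fun_prop
    have hτ0 : τ 0 = 0 := by simp [hτdef, zero_pow hk.ne']
    have hτtends : Tendsto τ (𝓝 0) (𝓝 0) := by
      have h1 := hτcont.tendsto 0
      rwa [hτ0] at h1
    have hτtendsP : Tendsto τ (𝓝[≠] (0:ℂ)) (𝓝 0) := hτtends.mono_left nhdsWithin_le_nhds
    have hσtendsP : Tendsto (fun s : ℂ => ε * s^k) (𝓝[≠] (0:ℂ)) (𝓝 0) :=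
      hcontk.mono_left nhdsWithin_le_nhds
    have hpowP := tendsto_pow_punctured hP0
    -- the main filter limit, first summand
    have hsub : ∀ s : ℂ, (-a * (s^N)⁻¹) • (Ψ (τ s) - Φ (s^l))
        = (-a * (s^N)⁻¹) • (Ψ (τ s) - Ψ (ε * s^k))
          + a • ((s^N)⁻¹ • (Φ (s^l) - Ψ (ε * s^k))) := by
      intro s
      rw [show Ψ (τ s) - Φ (s^l)
          = (Ψ (τ s) - Ψ (ε * s^k)) + (Ψ (ε * s^k) - Φ (s^l)) from
        (sub_add_sub_cancel _ _ _).symm, smul_add]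
      congr 1
      rw [neg_mul, neg_smul, ← smul_neg, neg_sub, mul_smul]
    have hf2 : Tendsto (fun s : ℂ => a • ((s^N)⁻¹ • (Φ (s^l) - Ψ (ε * s^k))))
        (𝓝[≠] (0:ℂ)) (𝓝 (a • vε)) := hvε.const_smul a
    have hf1 : Tendsto (fun s : ℂ => (-a * (s^N)⁻¹) • (Ψ (τ s) - Ψ (ε * s^k))) (𝓝[≠] (0:ℂ))
        (𝓝 (b • (Pi.single (0:Fin (n+1)) (1:ℂ) : Fin (n+1) → ℂ))) := by
      rw [tendsto_pi_nhds]
      intro i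
      by_cases hi : i = 0
      · subst hi
        have htarget : (b • (Pi.single (0 : Fin (n+1)) (1:ℂ) : Fin (n+1) → ℂ)) 0 = b := by
          simp
        rw [htarget]
        have hder : HasDerivAt (fun u : ℂ => (ε + c*u)^l - ε^l) ((l:ℂ) * ε^(l-1) * c) 0 := by
          have h1 : HasDerivAt (fun u : ℂ => ε + c*u) c 0 := by
            simpa using ((hasDerivAt_id (0:ℂ)).const_mul c).const_add ε
          have h2 := (h1.pow l).sub_const (ε^l)
          simpa using h2
        have hslope := tendsto_inv_mul_of_hasDerivAt hder (by simp)
        have hcomp := (hslope.const_mul (-a)).comp hpowP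
        have hval : -a * ((l:ℂ) * ε^(l-1) * c) = b := by
          have hεl1 : ε^(l-1) * ε = 1 := by
            rw [← pow_succ, show l - 1 + 1 = l from by omega]; exact hε
          rw [hcdef]
          field_simp
          linear_combination b * hεl1
        have hev : (fun s : ℂ => -a * (((s^P)⁻¹ * ((ε + c*s^P)^l - ε^l))))
            =ᶠ[𝓝[≠] (0:ℂ)]
            (fun s : ℂ => ((-a * (s^N)⁻¹) • (Ψ (τ s) - Ψ (ε * s^k))) 0) := by
          filter_upwards [self_mem_nhdsWithin, hτtendsP.eventually hballe,
            hσtendsP.eventually hballe] with s hs hb1 hb2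
          have hs0 : s ≠ 0 := hs
          rw [Pi.smul_apply, Pi.sub_apply, hΨ1 _ hb1, hΨ1 _ hb2, smul_eq_mul]
          simp only [hτdef]
          rw [mul_pow (ε + c * s^P) (s^k) l, mul_pow ε (s^k) l, ← pow_mul,
            hNsplit, pow_add, mul_comm k l]
          field_simp
        have h6 : Tendsto (fun s : ℂ => -a * (((s^P)⁻¹ * ((ε + c*s^P)^l - ε^l))))
            (𝓝[≠] (0:ℂ)) (𝓝 b) := by
          rw [← hval]
          simpa only [Function.comp_def] using hcomp
        exact h6.congr' hev
      · have htarget : (b • (Pi.single (0 : Fin (n+1)) (1:ℂ) : Fin (n+1) → ℂ)) i = 0 := by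
          simp [Pi.single_eq_of_ne hi]
        rw [htarget]
        -- derivative for the second slope function
        have h1 : HasDerivAt (fun u : ℂ => ε + c*u) c 0 := by
          simpa using ((hasDerivAt_id (0:ℂ)).const_mul c).const_add ε
        have hder2 : HasDerivAt (fun u : ℂ => (ε + c*u)^(l+1) - ε^(l+1))
            (((l:ℂ)+1) * ε^l * c) 0 := by
          have h2 := (h1.pow (l+1)).sub_const (ε^(l+1))
          simpa using h2
        have hslope2 := tendsto_inv_mul_of_hasDerivAt hder2 (by simp)
        have hkpow : Tendsto (fun s : ℂ => s^k) (𝓝[≠] (0:ℂ)) (𝓝 0) := by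
          have h3 := (continuous_pow k (M := ℂ)).tendsto 0
          rw [zero_pow hk.ne'] at h3
          exact h3.mono_left nhdsWithin_le_nhds
        have hgτ : Tendsto (fun s : ℂ => gΨ i (τ s)) (𝓝[≠] (0:ℂ)) (𝓝 (gΨ i 0)) :=
          (hgΨa i).continuousAt.tendsto.comp hτtendsP
        -- first term tends to 0
        have hT1 : Tendsto (fun s : ℂ =>
            (-a) * (s^k * (((s^P)⁻¹ * ((ε + c*s^P)^(l+1) - ε^(l+1))) * gΨ i (τ s))))
            (𝓝[≠] (0:ℂ)) (𝓝 0) := by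
          have hs2 : Tendsto (fun s : ℂ => (s^P)⁻¹ * ((ε + c*s^P)^(l+1) - ε^(l+1)))
              (𝓝[≠] (0:ℂ)) (𝓝 (((l:ℂ)+1) * ε^l * c)) := by
            simpa only [Function.comp_def] using hslope2.comp hpowP
          have h4 := (hkpow.mul (hs2.mul hgτ)).const_mul (-a)
          simpa using h4
        -- second term tends to 0 by Lipschitz bound
        obtain ⟨K, U, hU, hK⟩ := ((hgΨa i).contDiffAt (n := 1)).exists_lipschitzOnWith
        have hT2 : Tendsto (fun s : ℂ =>
            (-a * ε^(l+1)) * (s^k * ((s^P)⁻¹ * (gΨ i (τ s) - gΨ i (ε * s^k)))))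
            (𝓝[≠] (0:ℂ)) (𝓝 0) := by
          apply squeeze_zero_norm'
            (a := fun s : ℂ => (‖a‖ * ‖ε‖^(l+1) * ((K:ℝ) * ‖c‖)) * (‖s‖^k * ‖s‖^k))
          · filter_upwards [self_mem_nhdsWithin, hτtendsP.eventually hU,
              hσtendsP.eventually hU] with s hs hτU hσU
            have hs0 : s ≠ 0 := hs
            have hnorm0 : (0:ℝ) < ‖s‖ := norm_pos_iff.mpr hs0
            have hdist : ‖gΨ i (τ s) - gΨ i (ε * s^k)‖ ≤ (K:ℝ) * (‖c‖ * (‖s‖^P * ‖s‖^k)) := by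
              have h5 := hK.dist_le_mul (τ s) hτU (ε * s^k) hσU
              rw [dist_eq_norm, dist_eq_norm] at h5
              have h6 : τ s - ε * s^k = c * (s^P * s^k) := by simp only [hτdef]; ring
              have h7 : ‖τ s - ε * s^k‖ = ‖c‖ * (‖s‖^P * ‖s‖^k) := by
                rw [h6, norm_mul, norm_mul, norm_pow, norm_pow]
              calc ‖gΨ i (τ s) - gΨ i (ε * s^k)‖ ≤ (K:ℝ) * ‖τ s - ε * s^k‖ := h5
                _ = (K:ℝ) * (‖c‖ * (‖s‖^P * ‖s‖^k)) := by rw [h7]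
            have h20 : (‖s‖^P)⁻¹ * ‖gΨ i (τ s) - gΨ i (ε * s^k)‖ ≤ (K:ℝ) * ‖c‖ * ‖s‖^k := by
              rw [inv_mul_le_iff₀ (by positivity)]
              calc ‖gΨ i (τ s) - gΨ i (ε * s^k)‖ ≤ (K:ℝ) * (‖c‖ * (‖s‖^P * ‖s‖^k)) := hdist
                _ = ‖s‖^P * ((K:ℝ) * ‖c‖ * ‖s‖^k) := by ring
            simp only [norm_mul, norm_inv, norm_pow, norm_neg]
            calc ‖a‖ * ‖ε‖^(l+1) * (‖s‖^k * ((‖s‖^P)⁻¹ * ‖gΨ i (τ s) - gΨ i (ε * s^k)‖))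
                ≤ ‖a‖ * ‖ε‖^(l+1) * (‖s‖^k * ((K:ℝ) * ‖c‖ * ‖s‖^k)) := by gcongr
              _ = ‖a‖ * ‖ε‖^(l+1) * ((K:ℝ) * ‖c‖) * (‖s‖^k * ‖s‖^k) := by ring
          · have h8 : Tendsto (fun s : ℂ => ‖s‖^k * ‖s‖^k) (𝓝 (0:ℂ)) (𝓝 (0 * 0)) := by
              have h9 : Tendsto (fun s : ℂ => ‖s‖^k) (𝓝 (0:ℂ)) (𝓝 0) := by
                have := ((continuous_norm (E := ℂ)).pow k).tendsto 0
                simpa [zero_pow hk.ne', Pi.pow_def] using this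
              exact h9.mul h9
            have h10 := (h8.const_mul (‖a‖ * ‖ε‖^(l+1) * ((K:ℝ) * ‖c‖))).mono_left
              (nhdsWithin_le_nhds (s := {(0:ℂ)}ᶜ))
            simpa using h10
        have hev : (fun s : ℂ =>
            (-a) * (s^k * (((s^P)⁻¹ * ((ε + c*s^P)^(l+1) - ε^(l+1))) * gΨ i (τ s)))
            + (-a * ε^(l+1)) * (s^k * ((s^P)⁻¹ * (gΨ i (τ s) - gΨ i (ε * s^k)))))
            =ᶠ[𝓝[≠] (0:ℂ)]
            (fun s : ℂ => ((-a * (s^N)⁻¹) • (Ψ (τ s) - Ψ (ε * s^k))) i) := by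
          filter_upwards [self_mem_nhdsWithin, hτtendsP.eventually (hgΨe i hi),
            hσtendsP.eventually (hgΨe i hi)] with s hs hb1 hb2
          have hs0 : s ≠ 0 := hs
          rw [Pi.smul_apply, Pi.sub_apply, hb1, hb2, smul_eq_mul]
          simp only [hτdef]
          rw [mul_pow (ε + c * s^P) (s^k) (l+1), mul_pow ε (s^k) (l+1), ← pow_mul,
            show k*(l+1) = k*l+k from by ring, hNsplit, pow_add, pow_add]
          field_simp
          ring
        have h11 := (hT1.add hT2).congr' hev
        simpa using h11
    -- choose the radius and the sequence
    have hcnorm : (0:ℝ) < 1 + ‖c‖ := by positivity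
    set ρ : ℝ := min 1 (r / (2 * (1 + ‖c‖))) with hρdef
    have hρ0 : 0 < ρ := lt_min one_pos (by positivity)
    have hρ1 : ρ ≤ 1 := min_le_left _ _
    have hρ2 : ρ ≤ r / (2 * (1 + ‖c‖)) := min_le_right _ _
    have hρhalf : (1 + ‖c‖) * ρ ≤ r / 2 := by
      rw [le_div_iff₀ (by positivity)] at hρ2
      nlinarith
    have hρr : ρ < r := by nlinarith [norm_nonneg c]
    obtain ⟨t, htne, htnorm, htt⟩ := exists_seq_pos ρ hρ0
    have hmemx : ∀ ν, (t ν)^l ∈ Metric.ball (0:ℂ) r := by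
      intro ν
      rw [Metric.mem_ball, dist_zero_right, norm_pow]
      calc ‖t ν‖^l ≤ ‖t ν‖ :=
        pow_le_of_le_one (norm_nonneg _) (le_trans (htnorm ν) hρ1) hl.ne'
        _ ≤ ρ := htnorm ν
        _ < r := hρr
    have hmemy : ∀ ν, τ (t ν) ∈ Metric.ball (0:ℂ) r := by
      intro ν
      rw [Metric.mem_ball, dist_zero_right, hτdef]
      have hb1 : ‖t ν‖ ≤ 1 := le_trans (htnorm ν) hρ1
      have hb2 : ‖(ε + c * (t ν)^P) * (t ν)^k‖ ≤ (1 + ‖c‖) * ‖t ν‖ := by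
        rw [norm_mul, norm_pow]
        have hb3 : ‖ε + c * (t ν)^P‖ ≤ 1 + ‖c‖ := by
          calc ‖ε + c * (t ν)^P‖ ≤ ‖ε‖ + ‖c * (t ν)^P‖ := norm_add_le _ _
            _ = 1 + ‖c‖ * ‖t ν‖^P := by rw [hεnorm, norm_mul, norm_pow]
            _ ≤ 1 + ‖c‖ * 1 := by
                gcongr
                exact pow_le_one₀ (norm_nonneg _) hb1
            _ = 1 + ‖c‖ := by ring
        have hb4 : ‖t ν‖^k ≤ ‖t ν‖ := pow_le_of_le_one (norm_nonneg _) hb1 hk.ne'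
        exact mul_le_mul hb3 hb4 (by positivity) (by positivity)
      calc ‖(ε + c * (t ν)^P) * (t ν)^k‖ ≤ (1 + ‖c‖) * ‖t ν‖ := hb2
        _ ≤ (1 + ‖c‖) * ρ := by gcongr; exact htnorm ν
        _ ≤ r / 2 := hρhalf
        _ < r := by linarith
    have hcomm : a • vε + b • (Pi.single (0 : Fin (n+1)) (1:ℂ) : Fin (n+1) → ℂ)
        = b • (Pi.single (0 : Fin (n+1)) (1:ℂ) : Fin (n+1) → ℂ) + a • vε := add_comm _ _
    rw [hcomm]
    refine ⟨fun ν => Φ ((t ν)^l), fun ν => Ψ (τ (t ν)), fun ν => -a * ((t ν)^N)⁻¹,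
      fun ν => ⟨(t ν)^l, hmemx ν, rfl⟩, fun ν => ⟨τ (t ν), hmemy ν, rfl⟩, ?_, ?_, ?_⟩
    · have h12 : Tendsto (fun ν => (t ν)^l) atTop (𝓝 (0:ℂ)) :=
        hcontl.comp (htt.mono_right nhdsWithin_le_nhds)
      have h13 := hΦa.continuousAt.tendsto.comp h12
      simpa [hΦ0, Function.comp_def] using h13
    · have h12 : Tendsto (fun ν => τ (t ν)) atTop (𝓝 (0:ℂ)) :=
        hτtends.comp (htt.mono_right nhdsWithin_le_nhds)
      have h13 := hΨa.continuousAt.tendsto.comp h12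
      simpa [hΨ0, Function.comp_def] using h13
    · have L2 : Tendsto (fun s : ℂ => (-a * (s^N)⁻¹) • (Ψ (τ s) - Φ (s^l))) (𝓝[≠] (0:ℂ))
          (𝓝 (b • (Pi.single (0:Fin (n+1)) (1:ℂ) : Fin (n+1) → ℂ) + a • vε)) := by
        have h14 := hf1.add hf2
        exact h14.congr (fun s => (hsub s).symm)
      simpa only [Function.comp_def] using L2.comp htt
end

section
/- Transversal case: if Φ(t) and Ψ(τ) are injective holomorphic maps on K(r) into ℂⁿ with Φ(0) = Ψ(0) = 0, X = Φ(K(r)), Y = Ψ(K(r)), and the limits v₁ = lim Φ(t)/t^{ord Φ}, v₂ = lim Ψ(τ)/τ^{ord Ψ} are linearly independent over ℂ, then every vector of the form a·v₁ + b·v₂ (a, b ∈ ℂ) lies in C₀(X,Y); i.e., ℂ·v₁ + ℂ·v₂ ⊆ C₀(X,Y). -/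
open Filter Topology

lemma auxSeq {n : ℕ} (r : ℝ) (hr : 0 < r) (Φ : ℂ → (Fin n → ℂ)) (hΦ0 : Φ 0 = 0)
    {p : ℕ} (hp : p ≠ 0) (v : Fin n → ℂ)
    (hv : Tendsto (fun t : ℂ => (t ^ p)⁻¹ • Φ t) (𝓝[≠] 0) (𝓝 v)) (c : ℂ) :
    ∃ t : ℕ → ℂ, (∀ ν, t ν ∈ Metric.ball (0:ℂ) r) ∧ Tendsto t atTop (𝓝 (0:ℂ)) ∧
      Tendsto (fun ν : ℕ => ((ν : ℂ) + 1) • Φ (t ν)) atTop (𝓝 (c • v)) := by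
  set root : ℕ → ℂ := fun ν => (c / ((ν : ℂ) + 1)) ^ ((p : ℂ)⁻¹) with hrootdef
  have hpc : ((p : ℂ))⁻¹ ≠ 0 := by
    simp [Nat.cast_ne_zero, hp]
  have hnz : ∀ ν : ℕ, ((ν : ℂ) + 1) ≠ 0 := fun ν => Nat.cast_add_one_ne_zero ν
  have hnorm : ∀ ν, ‖root ν‖ = ‖c / ((ν : ℂ) + 1)‖ ^ ((p : ℝ)⁻¹) := by
    intro ν
    rcases eq_or_ne c 0 with hc | hc
    · simp [hrootdef, hc, Complex.zero_cpow hpc, Real.zero_rpow (by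
        simp [Nat.cast_ne_zero, hp] : ((p:ℝ))⁻¹ ≠ 0)]
    · have hb : c / ((ν : ℂ) + 1) ≠ 0 := div_ne_zero hc (hnz ν)
      show ‖(c / ((ν : ℂ) + 1)) ^ ((p : ℂ)⁻¹)‖ = _
      rw [Complex.norm_cpow_of_ne_zero hb]
      simp
  have hroot0 : Tendsto root atTop (𝓝 0) := by
    rw [tendsto_zero_iff_norm_tendsto_zero]
    have h1 : Tendsto (fun ν : ℕ => ‖c / ((ν : ℂ) + 1)‖) atTop (𝓝 0) := by
      simp only [norm_div]
      apply Tendsto.div_atTop (tendsto_const_nhds (x := ‖c‖))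
      have h : Tendsto (fun ν : ℕ => ((ν : ℝ) + 1)) atTop atTop :=
        tendsto_atTop_add_const_right _ 1 tendsto_natCast_atTop_atTop
      refine h.congr (fun ν => ?_)
      rw [show ((ν : ℂ) + 1) = (((ν : ℝ) + 1 : ℝ) : ℂ) by push_cast; ring,
        Complex.norm_real, Real.norm_of_nonneg (by positivity)]
    have h2 : Tendsto (fun x : ℝ => x ^ ((p : ℝ)⁻¹)) (𝓝 0) (𝓝 0) := by
      have := (Real.continuousAt_rpow_const 0 ((p : ℝ)⁻¹)
        (Or.inr (by positivity))).tendsto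
      rwa [Real.zero_rpow (by simp [Nat.cast_ne_zero, hp])] at this
    exact (h2.comp h1).congr (fun ν => (hnorm ν).symm)
  set t : ℕ → ℂ := fun ν => if ‖root ν‖ < r then root ν else 0 with htdef
  have hteq : ∀ ν, t ν = if ‖root ν‖ < r then root ν else 0 := fun ν => rfl
  have hmem : ∀ ν, t ν ∈ Metric.ball (0:ℂ) r := by
    intro ν
    rw [Metric.mem_ball, dist_zero_right, hteq]
    split_ifs with h
    · exact h
    · simpa using hr
  have heq : t =ᶠ[atTop] root := by
    filter_upwards [hroot0.norm.eventually (gt_mem_nhds (by simpa using hr))] with ν hν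
    rw [hteq, if_pos hν]
  have ht0 : Tendsto t atTop (𝓝 0) := hroot0.congr' heq.symm
  refine ⟨t, hmem, ht0, ?_⟩
  rcases eq_or_ne c 0 with hc | hc
  · have hz : ∀ ν, t ν = 0 := by
      intro ν
      rw [hteq]
      simp [hrootdef, hc, Complex.zero_cpow hpc, hr]
    simp only [hz, hΦ0, smul_zero, hc, zero_smul]
    exact tendsto_const_nhds
  · have hrootne : ∀ ν, root ν ≠ 0 := by
      intro ν h
      have hpow : (root ν) ^ p = c / ((ν : ℂ) + 1) :=
        Complex.cpow_nat_inv_pow _ hp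
      rw [h] at hpow
      simp only [zero_pow hp] at hpow
      exact div_ne_zero hc (hnz ν) hpow.symm
    have htne : ∀ᶠ ν in atTop, t ν ≠ 0 := by
      filter_upwards [heq] with ν hν
      rw [hν]; exact hrootne ν
    have ht0' : Tendsto t atTop (𝓝[≠] 0) := by
      rw [tendsto_nhdsWithin_iff]
      exact ⟨ht0, htne⟩
    have hcomp : Tendsto (fun ν : ℕ => ((t ν) ^ p)⁻¹ • Φ (t ν)) atTop (𝓝 v) :=
      hv.comp ht0'
    have key : (fun ν : ℕ => ((ν : ℂ) + 1) • Φ (t ν)) =ᶠ[atTop]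
        (fun ν : ℕ => c • (((t ν) ^ p)⁻¹ • Φ (t ν))) := by
      filter_upwards [heq] with ν hν
      have htp : (t ν) ^ p = c / ((ν : ℂ) + 1) := by
        rw [hν]; exact Complex.cpow_nat_inv_pow _ hp
      rw [smul_smul]
      congr 1
      rw [htp]
      field_simp
    exact (hcomp.const_smul c).congr' key.symm

lemma ord_ne_zero_of_indep {n : ℕ} (r : ℝ) (hr : 0 < r) (Φ : ℂ → (Fin n → ℂ))
    (hΦ : DifferentiableOn ℂ Φ (Metric.ball 0 r)) (hΦ0 : Φ 0 = 0)
    {p : ℕ} (v : Fin n → ℂ) (hv0 : v ≠ 0)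
    (hv : Tendsto (fun t : ℂ => (t ^ p)⁻¹ • Φ t) (𝓝[≠] 0) (𝓝 v)) : p ≠ 0 := by
  intro hp
  subst hp
  simp only [pow_zero, inv_one, one_smul] at hv
  have hc : ContinuousAt Φ 0 := by
    have := hΦ.continuousOn
    exact this.continuousAt (Metric.isOpen_ball.mem_nhds (by
      simp [Metric.mem_ball, hr]))
  have h2 : Tendsto Φ (𝓝[≠] (0:ℂ)) (𝓝 0) := by
    rw [← hΦ0]
    exact hc.tendsto.mono_left nhdsWithin_le_nhds
  exact hv0 (tendsto_nhds_unique hv h2)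

theorem stmt15 {n : ℕ} (r : ℝ) (hr : 0 < r) (Φ Ψ : ℂ → (Fin n → ℂ))
    (hΦ : DifferentiableOn ℂ Φ (Metric.ball 0 r))
    (hΨ : DifferentiableOn ℂ Ψ (Metric.ball 0 r))
    (hΦinj : Set.InjOn Φ (Metric.ball 0 r))
    (hΨinj : Set.InjOn Ψ (Metric.ball 0 r))
    (hΦ0 : Φ 0 = 0) (hΨ0 : Ψ 0 = 0)
    (v₁ v₂ : Fin n → ℂ)
    (hv₁ : Tendsto (fun t : ℂ => (t ^ holOrder Φ)⁻¹ • Φ t) (𝓝[≠] 0) (𝓝 v₁))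
    (hv₂ : Tendsto (fun τ : ℂ => (τ ^ holOrder Ψ)⁻¹ • Ψ τ) (𝓝[≠] 0) (𝓝 v₂))
    (hind : LinearIndependent ℂ ![v₁, v₂]) :
    ∀ a b : ℂ, a • v₁ + b • v₂ ∈
      relTangentCone (Φ '' Metric.ball 0 r) (Ψ '' Metric.ball 0 r) := by
  intro a b
  have hv₁0 : v₁ ≠ 0 := by simpa using hind.ne_zero 0
  have hv₂0 : v₂ ≠ 0 := by simpa using hind.ne_zero 1
  have hp : holOrder Φ ≠ 0 := ord_ne_zero_of_indep r hr Φ hΦ hΦ0 v₁ hv₁0 hv₁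
  have hq : holOrder Ψ ≠ 0 := ord_ne_zero_of_indep r hr Ψ hΨ hΨ0 v₂ hv₂0 hv₂
  obtain ⟨t, htmem, ht0, htlim⟩ := auxSeq r hr Φ hΦ0 hp v₁ hv₁ (-a)
  obtain ⟨τ, hτmem, hτ0, hτlim⟩ := auxSeq r hr Ψ hΨ0 hq v₂ hv₂ b
  have hcΦ : ContinuousAt Φ 0 :=
    hΦ.continuousOn.continuousAt (Metric.isOpen_ball.mem_nhds (by
      simp [Metric.mem_ball, hr]))
  have hcΨ : ContinuousAt Ψ 0 :=
    hΨ.continuousOn.continuousAt (Metric.isOpen_ball.mem_nhds (by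
      simp [Metric.mem_ball, hr]))
  refine ⟨fun ν => Φ (t ν), fun ν => Ψ (τ ν), fun ν => (ν : ℂ) + 1,
    fun ν => ⟨t ν, htmem ν, rfl⟩, fun ν => ⟨τ ν, hτmem ν, rfl⟩, ?_, ?_, ?_⟩
  · have := hcΦ.tendsto.comp ht0
    rwa [hΦ0] at this
  · have := hcΨ.tendsto.comp hτ0
    rwa [hΨ0] at this
  · have h := hτlim.sub htlim
    have heq : (fun ν : ℕ => ((ν : ℂ) + 1) • Ψ (τ ν) - ((ν : ℂ) + 1) • Φ (t ν)) =
        (fun ν : ℕ => ((ν : ℂ) + 1) • (Ψ (τ ν) - Φ (t ν))) := by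
      funext ν
      rw [smul_sub]
    rw [heq] at h
    have : b • v₂ - (-a) • v₁ = a • v₁ + b • v₂ := by module
    rwa [this] at h
end

section
/- Single-curve (Whitney cone C₅) case for a smooth parametrized curve: if Φ(t) = (t, φ₂(t), …, φₙ(t)) is holomorphic on K(r) with ord φᵢ ≥ 2 for all i, and X = Φ(K(r)), then C₀(X, X) = ℂ·e₁, the tangent line of X at 0. -/
open Filter Topology

set_option maxHeartbeats 1000000 in
theorem stmt17 {n : ℕ} (r : ℝ) (hr : 0 < r) (Φ : ℂ → (Fin (n + 1) → ℂ))
    (hΦ : DifferentiableOn ℂ Φ (Metric.ball 0 r))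
    (hΦ1 : ∀ t ∈ Metric.ball (0:ℂ) r, Φ t 0 = t)
    (hΦord : ∀ i : Fin (n + 1), i ≠ 0 → ∀ m ≤ 1, iteratedDeriv m (fun t => Φ t i) 0 = 0) :
    relTangentCone (Φ '' Metric.ball 0 r) (Φ '' Metric.ball 0 r)
      = Set.range (fun c : ℂ => c • ((Pi.single (0 : Fin (n + 1)) (1 : ℂ)) : Fin (n + 1) → ℂ)) := by
  have h0ball : (0:ℂ) ∈ Metric.ball (0:ℂ) r := by simpa using hr
  -- components are differentiable
  have hφdiff : ∀ i : Fin (n+1), DifferentiableOn ℂ (fun t => Φ t i) (Metric.ball 0 r) := by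
    intro i z hz
    exact (differentiableWithinAt_pi.mp (hΦ z hz)) i
  -- value and first derivative of nonzero components vanish at 0
  have hφ0 : ∀ i : Fin (n+1), i ≠ 0 → Φ 0 i = 0 := by
    intro i hi
    have := hΦord i hi 0 (by norm_num)
    simpa [iteratedDeriv_zero] using this
  have hφd0 : ∀ i : Fin (n+1), i ≠ 0 → deriv (fun t => Φ t i) 0 = 0 := by
    intro i hi
    have := hΦord i hi 1 le_rfl
    simpa [iteratedDeriv_one] using this
  have hΦzero : Φ 0 = 0 := by
    funext i
    by_cases hi : i = 0
    · subst hi; simpa using hΦ1 0 h0ball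
    · simpa using hφ0 i hi
  -- analyticity, hence continuity of the derivative of each component
  have hderivcont : ∀ i : Fin (n+1), ContinuousAt (deriv (fun t => Φ t i)) 0 := by
    intro i
    have han : AnalyticOnNhd ℂ (fun t => Φ t i) (Metric.ball 0 r) :=
      (hφdiff i).analyticOnNhd Metric.isOpen_ball
    exact (han.deriv 0 h0ball).continuousAt
  apply Set.Subset.antisymm
  · -- hard inclusion
    rintro v ⟨x, y, lam, hx, hy, hx0, hy0, hlim⟩
    choose s hs hΦs using hx
    choose t ht hΦt using hy
    have hsx : ∀ ν, s ν = x ν 0 := fun ν => by rw [← hΦs ν, hΦ1 _ (hs ν)]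
    have hty : ∀ ν, t ν = y ν 0 := fun ν => by rw [← hΦt ν, hΦ1 _ (ht ν)]
    have hs0 : Tendsto s atTop (𝓝 0) := by
      have : Tendsto (fun ν => x ν 0) atTop (𝓝 ((0 : Fin (n+1) → ℂ) 0)) :=
        ((continuous_apply (0 : Fin (n+1))).continuousAt.tendsto).comp hx0
      simpa [funext hsx] using this
    have ht0 : Tendsto t atTop (𝓝 0) := by
      have : Tendsto (fun ν => y ν 0) atTop (𝓝 ((0 : Fin (n+1) → ℂ) 0)) :=
        ((continuous_apply (0 : Fin (n+1))).continuousAt.tendsto).comp hy0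
      simpa [funext hty] using this
    -- componentwise limits
    have hcomp : ∀ i : Fin (n+1),
        Tendsto (fun ν => lam ν * (Φ (t ν) i - Φ (s ν) i)) atTop (𝓝 (v i)) := by
      intro i
      have : Tendsto (fun ν => (lam ν • (y ν - x ν)) i) atTop (𝓝 (v i)) :=
        ((continuous_apply i).continuousAt.tendsto).comp hlim
      simpa [hΦs, hΦt, Pi.smul_apply, smul_eq_mul, mul_sub] using this
    have h0lim : Tendsto (fun ν => lam ν * (t ν - s ν)) atTop (𝓝 (v 0)) := by
      have h := hcomp 0
      have heq : ∀ ν, Φ (t ν) 0 - Φ (s ν) 0 = t ν - s ν := fun ν => by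
        rw [hΦ1 _ (ht ν), hΦ1 _ (hs ν)]
      simpa only [heq] using h
    refine ⟨v 0, ?_⟩
    funext i
    by_cases hi : i = 0
    · subst hi; simp [Pi.single_apply]
    · -- show v i = 0
      have key : v i = 0 := by
        have hbound : ∀ ε : ℝ, 0 < ε → ‖v i‖ ≤ ε * (‖v 0‖ + 1) := by
          intro ε hε
          -- find a radius where the derivative is small
          have hcont := hderivcont i
          rw [Metric.continuousAt_iff] at hcont
          obtain ⟨δ, hδ, hδ'⟩ := hcont ε hε
          set ρ := min δ r with hρdef
          have hρ : 0 < ρ := lt_min hδ hr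
          have hρr : Metric.ball (0:ℂ) ρ ⊆ Metric.ball (0:ℂ) r :=
            Metric.ball_subset_ball (min_le_right _ _)
          have hdsmall : ∀ z ∈ Metric.ball (0:ℂ) ρ, ‖deriv (fun u => Φ u i) z‖ ≤ ε := by
            intro z hz
            have hz' : dist z 0 < δ := lt_of_lt_of_le (Metric.mem_ball.mp hz) (min_le_left _ _)
            have := hδ' hz'
            rw [hφd0 i hi] at this
            simpa [dist_eq_norm] using this.le
          -- MVT bound
          have hmvt : ∀ a ∈ Metric.ball (0:ℂ) ρ, ∀ b ∈ Metric.ball (0:ℂ) ρ,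
              ‖Φ b i - Φ a i‖ ≤ ε * ‖b - a‖ := by
            intro a ha b hb
            exact (convex_ball (0:ℂ) ρ).norm_image_sub_le_of_norm_deriv_le
              (fun z hz => ((hφdiff i) z (hρr hz)).differentiableAt
                (Metric.isOpen_ball.mem_nhds (hρr hz)))
              hdsmall ha hb
          -- eventually the bound holds
          have hsmem : ∀ᶠ ν in atTop, s ν ∈ Metric.ball (0:ℂ) ρ :=
            hs0 (Metric.ball_mem_nhds 0 hρ)
          have htmem : ∀ᶠ ν in atTop, t ν ∈ Metric.ball (0:ℂ) ρ :=
            ht0 (Metric.ball_mem_nhds 0 hρ)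
          have hlamb : ∀ᶠ ν in atTop, ‖lam ν * (t ν - s ν)‖ ≤ ‖v 0‖ + 1 := by
            have : Tendsto (fun ν => ‖lam ν * (t ν - s ν)‖) atTop (𝓝 ‖v 0‖) :=
              h0lim.norm
            exact (this.eventually_le_const (by linarith [norm_nonneg (v 0)]))
          have hev : ∀ᶠ ν in atTop,
              ‖lam ν * (Φ (t ν) i - Φ (s ν) i)‖ ≤ ε * (‖v 0‖ + 1) := by
            filter_upwards [hsmem, htmem, hlamb] with ν h1 h2 h3
            calc ‖lam ν * (Φ (t ν) i - Φ (s ν) i)‖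
                = ‖lam ν‖ * ‖Φ (t ν) i - Φ (s ν) i‖ := norm_mul _ _
              _ ≤ ‖lam ν‖ * (ε * ‖t ν - s ν‖) := by
                  exact mul_le_mul_of_nonneg_left (hmvt _ h1 _ h2) (norm_nonneg _)
              _ = ε * ‖lam ν * (t ν - s ν)‖ := by rw [norm_mul]; ring
              _ ≤ ε * (‖v 0‖ + 1) := mul_le_mul_of_nonneg_left h3 hε.le
          exact le_of_tendsto (hcomp i).norm hev
        have hC : (0:ℝ) < ‖v 0‖ + 1 := by positivity
        have : ‖v i‖ ≤ 0 := by
          refine le_of_forall_pos_le_add ?_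
          intro δ hδ
          have := hbound (δ / (‖v 0‖ + 1)) (by positivity)
          rw [div_mul_cancel₀ _ hC.ne'] at this
          linarith
        simpa using le_antisymm this (norm_nonneg _)
      simp [key, Pi.single_apply, hi]
  · -- easy inclusion: the tangent line is contained in the cone
    rintro v ⟨c, rfl⟩
    -- sequence of parameters
    set τ : ℕ → ℂ := fun ν => ((r / 2 / (ν + 1) : ℝ) : ℂ) with hτdef
    have hτne : ∀ ν, τ ν ≠ 0 := by
      intro ν
      simp only [hτdef, Ne, Complex.ofReal_eq_zero]
      positivity
    have hτmem : ∀ ν, τ ν ∈ Metric.ball (0:ℂ) r := by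
      intro ν
      simp only [hτdef, Metric.mem_ball, dist_zero_right, Complex.norm_real,
        Real.norm_eq_abs]
      rw [abs_of_pos (by positivity)]
      have h1 : (1:ℝ) ≤ ν + 1 := by exact_mod_cast Nat.succ_le_succ (Nat.zero_le ν)
      calc r / 2 / (ν + 1 : ℝ) ≤ r / 2 / 1 := by
            apply div_le_div_of_nonneg_left (by linarith) (by norm_num) h1
        _ < r := by linarith
    have hτ0 : Tendsto τ atTop (𝓝 0) := by
      rw [hτdef]
      rw [show ((0:ℂ)) = ((0:ℝ):ℂ) by norm_num]
      apply Tendsto.comp Complex.continuous_ofReal.continuousAt.tendsto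
      exact tendsto_const_nhds.div_atTop (tendsto_natCast_atTop_atTop.atTop_add tendsto_const_nhds)
    have hτ0' : Tendsto τ atTop (𝓝[≠] 0) :=
      tendsto_nhdsWithin_of_tendsto_nhds_of_eventually_within _ hτ0
        (Eventually.of_forall fun ν => hτne ν)
    refine ⟨fun _ => Φ 0, fun ν => Φ (τ ν), fun ν => c / τ ν,
      fun ν => ⟨0, h0ball, rfl⟩, fun ν => ⟨τ ν, hτmem ν, rfl⟩, ?_, ?_, ?_⟩
    · simpa [hΦzero] using (tendsto_const_nhds : Tendsto (fun _ : ℕ => (0 : Fin (n+1) → ℂ)) atTop _)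
    · have hcont : ContinuousAt Φ 0 :=
        (hΦ.differentiableAt (Metric.isOpen_ball.mem_nhds h0ball)).continuousAt
      have := hcont.tendsto.comp hτ0
      simpa [hΦzero, Function.comp_def] using this
    · rw [tendsto_pi_nhds]
      intro i
      have heval : ∀ ν, ((c / τ ν) • (Φ (τ ν) - Φ 0)) i = c / τ ν * Φ (τ ν) i := by
        intro ν
        simp [hΦzero, smul_eq_mul]
      by_cases hi : i = 0
      · subst hi
        have : ∀ ν, ((c / τ ν) • (Φ (τ ν) - Φ 0)) 0 = c := by
          intro ν
          rw [heval, hΦ1 _ (hτmem ν), div_mul_cancel₀ _ (hτne ν)]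
        simpa [this, Pi.single_apply] using
          (tendsto_const_nhds : Tendsto (fun _ : ℕ => c) atTop (𝓝 c))
      · -- target component is 0
        have hslope : HasDerivAt (fun u => Φ u i) 0 0 := by
          have hd : DifferentiableAt ℂ (fun u => Φ u i) 0 :=
            ((hφdiff i) 0 h0ball).differentiableAt (Metric.isOpen_ball.mem_nhds h0ball)
          have := hd.hasDerivAt
          rwa [hφd0 i hi] at this
        have htend : Tendsto (fun ν => Φ (τ ν) i / τ ν) atTop (𝓝 0) := by
          have h1 := hasDerivAt_iff_tendsto_slope.mp hslope
          have h2 := h1.comp hτ0'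
          have heq : ∀ ν, slope (fun u => Φ u i) 0 (τ ν) = Φ (τ ν) i / τ ν := by
            intro ν
            rw [slope_def_field]
            show (Φ (τ ν) i - Φ 0 i) / (τ ν - 0) = _
            rw [hφ0 i hi, sub_zero, sub_zero]
          exact (Tendsto.congr heq h2 : _)
        have hfin : Tendsto (fun ν => c / τ ν * Φ (τ ν) i) atTop (𝓝 0) := by
          have h3 := htend.const_mul c
          rw [mul_zero] at h3
          exact h3.congr (fun ν => by ring)
        have htgt : (c • ((Pi.single (0 : Fin (n+1)) (1:ℂ)) : Fin (n+1) → ℂ)) i = 0 := by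
          simp [Pi.single_apply, hi]
        have hgoal : Tendsto (fun ν => ((c / τ ν) • (Φ (τ ν) - Φ 0)) i) atTop
            (𝓝 ((c • ((Pi.single (0 : Fin (n+1)) (1:ℂ)) : Fin (n+1) → ℂ)) i)) := by
          rw [htgt]
          exact hfin.congr (fun ν => (heval ν).symm)
        exact hgoal
end

section
/- The secant cone of the cusp: for X = {(t², t³) : t ∈ ℂ} ⊆ ℂ², the relative tangent cone C₀(X, X) equals all of ℂ². -/
open Filter Topology

lemma eseq_ne (ν : ℕ) : ((ν:ℂ)+1)⁻¹ ≠ 0 := by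
  apply inv_ne_zero
  have : ((ν+1:ℕ):ℂ) ≠ 0 := Nat.cast_ne_zero.2 (Nat.succ_ne_zero ν)
  push_cast at this; exact this

lemma eseq_tendsto : Tendsto (fun ν : ℕ => ((ν:ℂ)+1)⁻¹) atTop (𝓝 0) := by
  have : (fun ν : ℕ => ((ν:ℂ)+1)⁻¹) = fun ν : ℕ => ((1/((ν:ℝ)+1) : ℝ) : ℂ) := by
    funext ν; push_cast; rw [one_div]
  rw [this]
  simpa [Function.comp_def] using
    (Complex.continuous_ofReal.tendsto 0).comp tendsto_one_div_add_atTop_nhds_zero_nat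

lemma dseq_ne (ν : ℕ) : 1 - ((ν:ℂ)+1)⁻¹ + ((ν:ℂ)+1)⁻¹ ^ 2 ≠ 0 := by
  have hn : ((ν:ℂ)+1) ≠ 0 := by
    have : ((ν+1:ℕ):ℂ) ≠ 0 := Nat.cast_ne_zero.2 (Nat.succ_ne_zero ν)
    push_cast at this; exact this
  intro h
  have h2 : ((ν:ℂ)+1)^2 * (1 - ((ν:ℂ)+1)⁻¹ + ((ν:ℂ)+1)⁻¹ ^ 2) = (ν:ℂ)^2 + (ν:ℂ) + 1 := by
    field_simp; ring
  rw [h, mul_zero] at h2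
  have h3 : ((ν^2+ν+1:ℕ):ℂ) = ((0:ℕ):ℂ) := by push_cast; linear_combination -h2
  have := Nat.cast_inj (R := ℂ) |>.1 h3
  omega

lemma eseq_ne_two (ν : ℕ) : ((ν:ℂ)+1)⁻¹ - 2 ≠ 0 := by
  intro h
  have hn : ((ν:ℂ)+1) ≠ 0 := by
    have : ((ν+1:ℕ):ℂ) ≠ 0 := Nat.cast_ne_zero.2 (Nat.succ_ne_zero ν)
    push_cast at this; exact this
  have h2 : (1:ℂ) = 2 * ((ν:ℂ)+1) := by field_simp at h; linear_combination h
  have : ((1:ℕ):ℂ) = ((2*ν+2:ℕ):ℂ) := by push_cast; linear_combination h2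
  have := Nat.cast_inj (R := ℂ) |>.1 this
  omega

theorem stmt18 :
    relTangentCone
      {v : Fin 2 → ℂ | ∃ t : ℂ, v = ![t ^ 2, t ^ 3]}
      {v : Fin 2 → ℂ | ∃ t : ℂ, v = ![t ^ 2, t ^ 3]}
    = Set.univ := by
  apply Set.eq_univ_of_forall
  intro v
  set e : ℕ → ℂ := fun ν => ((ν:ℂ)+1)⁻¹ with he_def
  have he0 : ∀ ν, e ν ≠ 0 := eseq_ne
  have heT : Tendsto e atTop (𝓝 0) := eseq_tendsto
  have hv : (![v 0, v 1] : Fin 2 → ℂ) = v := by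
    funext i; fin_cases i <;> rfl
  by_cases ha : v 0 = 0
  · -- a = 0 : use ±t trick
    refine ⟨fun ν => ![e ν ^ 2, e ν ^ 3], fun ν => ![e ν ^ 2, -(e ν ^ 3)],
      fun ν => -(v 1) / (2 * e ν ^ 3), fun ν => ⟨e ν, rfl⟩,
      fun ν => ⟨-(e ν), by funext i; fin_cases i <;> simp <;> ring⟩, ?_, ?_, ?_⟩
    · rw [tendsto_pi_nhds]; intro i; fin_cases i <;> simp <;>
        [simpa using heT.pow 2; simpa using heT.pow 3]
    · rw [tendsto_pi_nhds]; intro i; fin_cases i <;> simp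
      · simpa using heT.pow 2
      · simpa using (heT.pow 3).neg
    · have key : (fun ν => (-(v 1) / (2 * e ν ^ 3)) • (![e ν ^ 2, -(e ν ^ 3)] - ![e ν ^ 2, e ν ^ 3])) = fun _ => v := by
        funext ν i; fin_cases i <;>
          simp [Pi.smul_apply, Pi.sub_apply, smul_eq_mul]
        · exact ha.symm
        · have := he0 ν; field_simp; ring
      rw [key]; exact tendsto_const_nhds
  · by_cases hb : v 1 = 0
    · -- b = 0, a ≠ 0 : tangent direction
      refine ⟨fun _ => 0, fun ν => ![e ν ^ 2, e ν ^ 3], fun ν => v 0 / e ν ^ 2,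
        fun ν => ⟨0, by funext i; fin_cases i <;> simp⟩, fun ν => ⟨e ν, rfl⟩,
        tendsto_const_nhds, ?_, ?_⟩
      · rw [tendsto_pi_nhds]; intro i; fin_cases i <;> simp <;>
          [simpa using heT.pow 2; simpa using heT.pow 3]
      · have key : (fun ν => (v 0 / e ν ^ 2) • (![e ν ^ 2, e ν ^ 3] - 0)) =
            fun ν => ![v 0, v 0 * e ν] := by
          funext ν i; fin_cases i <;>
            simp [Pi.smul_apply, Pi.sub_apply, smul_eq_mul]
          · exact div_mul_cancel₀ _ (pow_ne_zero 2 (he0 ν))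
          · have := he0 ν; field_simp
        rw [key, tendsto_pi_nhds]; intro i; fin_cases i <;> simp [hb] <;>
          simpa using heT.const_mul (v 0)
    · -- a ≠ 0, b ≠ 0 : secant construction
      set d : ℕ → ℂ := fun ν => 1 - e ν + e ν ^ 2 with hd_def
      have hd0 : ∀ ν, d ν ≠ 0 := dseq_ne
      set s : ℕ → ℂ := fun ν => (v 1 / v 0) * e ν / d ν with hs_def
      set t : ℕ → ℂ := fun ν => (-1 + e ν) * s ν with ht_def
      have hs0 : ∀ ν, s ν ≠ 0 := fun ν =>
        div_ne_zero (mul_ne_zero (div_ne_zero hb ha) (he0 ν)) (hd0 ν)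
      have hts : ∀ ν, t ν ^ 2 - s ν ^ 2 = s ν ^ 2 * e ν * (e ν - 2) := by
        intro ν; simp only [ht_def]; ring
      have hts0 : ∀ ν, t ν ^ 2 - s ν ^ 2 ≠ 0 := by
        intro ν; rw [hts ν]
        exact mul_ne_zero (mul_ne_zero (pow_ne_zero 2 (hs0 ν)) (he0 ν)) (eseq_ne_two ν)
      have hdT : Tendsto d atTop (𝓝 1) := by
        have := ((tendsto_const_nhds (x := (1:ℂ))).sub heT).add (heT.pow 2)
        simpa using this
      have hsT : Tendsto s atTop (𝓝 0) := by
        have := ((tendsto_const_nhds (x := v 1 / v 0)).mul heT).div hdT one_ne_zero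
        simp at this; exact this
      have htT : Tendsto t atTop (𝓝 0) := by
        have := ((tendsto_const_nhds (x := (-1:ℂ))).add heT).mul hsT
        simpa using this
      refine ⟨fun ν => ![s ν ^ 2, s ν ^ 3], fun ν => ![t ν ^ 2, t ν ^ 3],
        fun ν => v 0 / (t ν ^ 2 - s ν ^ 2),
        fun ν => ⟨s ν, rfl⟩, fun ν => ⟨t ν, rfl⟩, ?_, ?_, ?_⟩
      · rw [tendsto_pi_nhds]; intro i; fin_cases i <;> simp <;>
          [simpa using hsT.pow 2; simpa using hsT.pow 3]
      · rw [tendsto_pi_nhds]; intro i; fin_cases i <;> simp <;>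
          [simpa using htT.pow 2; simpa using htT.pow 3]
      · have key : (fun ν => (v 0 / (t ν ^ 2 - s ν ^ 2)) • (![t ν ^ 2, t ν ^ 3] - ![s ν ^ 2, s ν ^ 3])) = fun _ => v := by
          funext ν i
          rw [← hv]
          fin_cases i <;> simp [Pi.smul_apply, Pi.sub_apply, smul_eq_mul]
          · exact div_mul_cancel₀ _ (hts0 ν)
          · -- v 0 / (t²-s²) * (t³-s³) = v 1
            have h1 : t ν ^ 3 - s ν ^ 3 = s ν ^ 3 * (e ν ^ 3 - 3 * e ν ^ 2 + 3 * e ν - 2) := by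
              simp only [ht_def]; ring
            have h2 : e ν ^ 3 - 3 * e ν ^ 2 + 3 * e ν - 2 = (e ν - 2) * d ν := by
              simp only [hd_def]; ring
            rw [hts ν, h1, h2]
            have hsd : v 0 * (s ν * d ν) = v 1 * e ν := by
              rw [hs_def]; field_simp
              exact mul_div_cancel_right₀ _ (hd0 ν)
            rw [div_mul_eq_mul_div, div_eq_iff (mul_ne_zero (mul_ne_zero
              (pow_ne_zero 2 (hs0 ν)) (he0 ν)) (eseq_ne_two ν))]
            linear_combination (s ν ^ 2 * (e ν - 2)) * hsd
        rw [key]; exact tendsto_const_nhds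
end

section
/- Root-of-unity normalization: let Φ, Ψ be as in the main theorem (Φ(t) = (t^k, φ₂(t), …), Ψ(τ) = (τ^l, ψ₂(τ), …), ord φᵢ > k, ord ψᵢ > l, l ≤ k). For any ε with ε^l = 1 and η with η^k = 1, let v_{ε,η} = lim_{t→0}(Φ(η t^l) − Ψ(ε t^k))/t^{ord(Φ(η t^l) − Ψ(ε t^k))}. Then there exists an l-th root of unity εᵢ such that ℂ·v_{ε,η} = ℂ·vᵢ, where vᵢ = lim_{t→0}(Φ(t^l) − Ψ(εᵢ t^k))/t^{nᵢ}. -/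
open Filter Topology

section aux

variable {F : Type*} [NormedAddCommGroup F] [NormedSpace ℂ F]

lemma differentiableAt_comp_const_mul' {f : ℂ → F} {c x : ℂ} (hc : c ≠ 0)
    (h : DifferentiableAt ℂ (fun y => f (c * y)) x) : DifferentiableAt ℂ f (c * x) := by
  have hx : c⁻¹ * (c * x) = x := by field_simp
  have h2 : DifferentiableAt ℂ ((fun y => f (c * y)) ∘ (fun y => c⁻¹ * y)) (c * x) := by
    apply DifferentiableAt.comp
    · rw [hx]; exact h
    · exact (differentiableAt_id).const_mul c⁻¹
  have h3 : ((fun y => f (c * y)) ∘ (fun y => c⁻¹ * y)) = f := by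
    funext y; simp only [Function.comp_apply]
    rw [← mul_assoc, mul_inv_cancel₀ hc, one_mul]
  rwa [h3] at h2

lemma deriv_comp_const_mul' (f : ℂ → F) (c x : ℂ) (hc : c ≠ 0) :
    deriv (fun y => f (c * y)) x = c • deriv f (c * x) := by
  by_cases hf : DifferentiableAt ℂ f (c * x)
  · have h1 : HasDerivAt (fun y : ℂ => c * y) c x := by
      simpa using (hasDerivAt_id x).const_mul c
    exact (HasDerivAt.scomp x hf.hasDerivAt h1).deriv
  · rw [deriv_zero_of_not_differentiableAt hf,
      deriv_zero_of_not_differentiableAt (fun h => hf (differentiableAt_comp_const_mul' hc h)),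
      smul_zero]

lemma iteratedDeriv_comp_const_mul' (n : ℕ) (f : ℂ → F) (c : ℂ) (hc : c ≠ 0) (a : ℂ) :
    iteratedDeriv n (fun x => f (c * x)) a = c ^ n • iteratedDeriv n f (c * a) := by
  induction n generalizing a with
  | zero => simp
  | succ n ih =>
    have ih' : iteratedDeriv n (fun x => f (c * x))
        = fun x => c ^ n • iteratedDeriv n f (c * x) := funext ih
    rw [iteratedDeriv_succ, ih', deriv_fun_const_smul_field (c ^ n)
      (f := fun x => iteratedDeriv n f (c * x)),
      deriv_comp_const_mul' (iteratedDeriv n f) c a hc, iteratedDeriv_succ,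
      smul_smul, pow_succ, mul_comm]

lemma holOrder_comp_const_mul (f : ℂ → F) (c : ℂ) (hc : c ≠ 0) :
    holOrder (fun x => f (c * x)) = holOrder f := by
  unfold holOrder
  congr 1
  ext m
  have := iteratedDeriv_comp_const_mul' m f c hc 0
  rw [mul_zero] at this
  simp only [Set.mem_setOf_eq, this, smul_ne_zero_iff, ne_eq, pow_eq_zero_iff',
    not_and_or, not_not]
  tauto

end aux

theorem stmt19    {n : ℕ} (r : ℝ) (hr : 0 < r) (k l : ℕ) (hk : 0 < k) (hl : 0 < l)
    (Φ Ψ : ℂ → (Fin (n + 1) → ℂ))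
    (hΦ : DifferentiableOn ℂ Φ (Metric.ball 0 r))
    (hΨ : DifferentiableOn ℂ Ψ (Metric.ball 0 r))
    (hΦinj : Set.InjOn Φ (Metric.ball 0 r))
    (hΨinj : Set.InjOn Ψ (Metric.ball 0 r))
    (hΦ1 : ∀ t ∈ Metric.ball (0:ℂ) r, Φ t 0 = t ^ k)
    (hΨ1 : ∀ τ ∈ Metric.ball (0:ℂ) r, Ψ τ 0 = τ ^ l)
    (hΦord : ∀ i : Fin (n + 1), i ≠ 0 → ∀ m ≤ k, iteratedDeriv m (fun t => Φ t i) 0 = 0)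
    (hΨord : ∀ i : Fin (n + 1), i ≠ 0 → ∀ m ≤ l, iteratedDeriv m (fun τ => Ψ τ i) 0 = 0)
    (hlk : l ≤ k)
    (ε η : ℂ) (hε : ε ^ l = 1) (hη : η ^ k = 1)
    (vεη : Fin (n + 1) → ℂ)
    (hvεη : Tendsto (fun t : ℂ =>
        (t ^ holOrder (fun s : ℂ => Φ (η * s ^ l) - Ψ (ε * s ^ k)))⁻¹ •
          (Φ (η * t ^ l) - Ψ (ε * t ^ k))) (𝓝[≠] 0) (𝓝 vεη)) :
    ∃ ε' : ℂ, ε' ^ l = 1 ∧ ∃ v' : Fin (n + 1) → ℂ,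
      Tendsto (fun t : ℂ =>
          (t ^ holOrder (fun s : ℂ => Φ (s ^ l) - Ψ (ε' * s ^ k)))⁻¹ •
            (Φ (t ^ l) - Ψ (ε' * t ^ k))) (𝓝[≠] 0) (𝓝 v') ∧
      Submodule.span ℂ {vεη} = Submodule.span ℂ {v'} := by
  -- η ≠ 0
  have hη0 : η ≠ 0 := by
    intro h; rw [h, zero_pow hk.ne'] at hη; exact zero_ne_one hη
  have hε0 : ε ≠ 0 := by
    intro h; rw [h, zero_pow hl.ne'] at hε; exact zero_ne_one hε
  -- choose δ with δ^l = η
  obtain ⟨δ, hδl⟩ := IsAlgClosed.exists_pow_nat_eq η hl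
  have hδ0 : δ ≠ 0 := by
    intro h; rw [h, zero_pow hl.ne'] at hδl; exact hη0 hδl.symm
  set ε' : ℂ := ε / δ ^ k with hε'def
  have hε'l : ε' ^ l = 1 := by
    rw [hε'def, div_pow, hε, ← pow_mul, mul_comm k l, pow_mul, hδl, hη, div_one]
  refine ⟨ε', hε'l, ?_⟩
  set f' : ℂ → (Fin (n + 1) → ℂ) := fun s => Φ (s ^ l) - Ψ (ε' * s ^ k) with hf'
  have hkey : ∀ s : ℂ, Φ (η * s ^ l) - Ψ (ε * s ^ k) = f' (δ * s) := by
    intro s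
    have h1 : (δ * s) ^ l = η * s ^ l := by rw [mul_pow, hδl]
    have h2 : ε' * (δ * s) ^ k = ε * s ^ k := by
      rw [mul_pow, hε'def, div_mul_eq_mul_div, mul_comm (δ ^ k),
        mul_div_assoc, mul_div_assoc, div_self (pow_ne_zero k hδ0), mul_one]
    show Φ (η * s ^ l) - Ψ (ε * s ^ k) = Φ ((δ * s) ^ l) - Ψ (ε' * (δ * s) ^ k)
    rw [h1, h2]
  set N : ℕ := holOrder f' with hN
  have hord : holOrder (fun s : ℂ => Φ (η * s ^ l) - Ψ (ε * s ^ k)) = N := by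
    have : (fun s : ℂ => Φ (η * s ^ l) - Ψ (ε * s ^ k)) = fun s => f' (δ * s) :=
      funext hkey
    rw [this, hN, holOrder_comp_const_mul f' δ hδ0]
  -- map t ↦ δ⁻¹ * t preserves 𝓝[≠] 0
  have hmap : Tendsto (fun t : ℂ => δ⁻¹ * t) (𝓝[≠] 0) (𝓝[≠] 0) := by
    rw [tendsto_nhdsWithin_iff]
    constructor
    · have : Tendsto (fun t : ℂ => δ⁻¹ * t) (𝓝 0) (𝓝 (δ⁻¹ * 0)) :=
        (tendsto_id.const_mul δ⁻¹)
      rw [mul_zero] at this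
      exact this.mono_left nhdsWithin_le_nhds
    · filter_upwards [self_mem_nhdsWithin] with t ht
      exact mul_ne_zero (inv_ne_zero hδ0) ht
  -- compose
  have hcomp := hvεη.comp hmap
  have heq : (fun t : ℂ =>
      (t ^ holOrder (fun s : ℂ => Φ (η * s ^ l) - Ψ (ε * s ^ k)))⁻¹ •
        (Φ (η * t ^ l) - Ψ (ε * t ^ k))) ∘ (fun t : ℂ => δ⁻¹ * t)
      = fun t : ℂ => (δ ^ N) • ((t ^ N)⁻¹ • f' t) := by
    funext t
    have h3 : δ * (δ⁻¹ * t) = t := by field_simp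
    simp only [Function.comp_apply]
    rw [hord, hkey (δ⁻¹ * t), h3, mul_pow, mul_inv, inv_pow, inv_inv, mul_smul]
  rw [heq] at hcomp
  refine ⟨(δ ^ N)⁻¹ • vεη, ?_, ?_⟩
  · have := hcomp.const_smul ((δ ^ N)⁻¹ : ℂ)
    simp only [smul_smul, ← mul_assoc, inv_mul_cancel₀ (pow_ne_zero N hδ0), one_mul] at this
    exact this
  · exact (Submodule.span_singleton_smul_eq
      (isUnit_iff_ne_zero.mpr (inv_ne_zero (pow_ne_zero N hδ0))) vεη).symm
end
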